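/- arXiv:2406.13341 — 4 statements merged into one kernel-verified Lean document; each statement's English description precedes it below -/
import Mathlib

section
/- Let H' and H'' be two projections of the n-dimensional Hamming graph G = □_{i=1}^n K_k satisfying dist(H',H'') ≤ 2. Then there exists a projection H of G with dim(H) ≤ dim(H') + dim(H'') + dist(H',H'') such that the 2-neighbour bootstrap closure of V(H') ∪ V(H'') equals V(H). -/
open scoped Classical

section Defs

variable {V : Type*}

/-- One round of 2-neighbour bootstrap percolation: a healthy vertex becomes infected
if it has at least two infected neighbours. -/
def bootStep (G : SimpleGraph V) (A : Set V) : Set V :=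
  A ∪ {v | ∃ u w, u ≠ w ∧ G.Adj v u ∧ G.Adj v w ∧ u ∈ A ∧ w ∈ A}

/-- Iterates of the bootstrap process. -/
def bootIter (G : SimpleGraph V) (A : Set V) : ℕ → Set V
  | 0 => A
  | j + 1 => bootStep G (bootIter G A j)

/-- The 2-neighbour bootstrap closure `[A]` of a set `A` of initially infected vertices. -/
def bootClosure (G : SimpleGraph V) (A : Set V) : Set V :=
  ⋃ j, bootIter G A j

/-- Graph distance between two sets of vertices. -/
noncomputable def setDist (G : SimpleGraph V) (X Y : Set V) : ℕ :=
  sInf {d | ∃ u ∈ X, ∃ v ∈ Y, G.dist u v = d}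

/-- A sequence of `m` vertices `v 0, …, v (m-1)` (a "sequentially spanning sequence of
length `m-1`") is sequentially spanning if each vertex lies at distance exactly two from the
bootstrap closure of its predecessors. -/
def SeqSpanSeq (G : SimpleGraph V) (m : ℕ) (v : Fin m → V) : Prop :=
  ∀ i : Fin m, 0 < (i : ℕ) →
    setDist G (bootClosure G (v '' {j | (j : ℕ) < (i : ℕ)})) {v i} = 2

/-- A set `U` is sequentially spanning if its vertices admit an ordering which is a
sequentially spanning sequence. -/
def SeqSpanSet (G : SimpleGraph V) (U : Set V) : Prop :=
  ∃ (m : ℕ) (v : Fin (m + 1) → V), Function.Injective v ∧ Set.range v = U ∧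
    SeqSpanSeq G (m + 1) v

/-- A family `F` of vertex sets is disjointly internally spanned by `A` if there are
pairwise disjoint subsets of `A` internally spanning each member of `F`. -/
def DisjIntSpanned (G : SimpleGraph V) (A : Set V) (F : Set (Set V)) : Prop :=
  ∃ B : Set V → Set V,
    (∀ U ∈ F, B U ⊆ A ∧ bootClosure G (B U ∩ U) = U) ∧
    (∀ U ∈ F, ∀ W ∈ F, U ≠ W → Disjoint (B U) (B W))

/-- The probability that the `p`-random subset of a finite vertex set satisfies the event `E`. -/
noncomputable def probEvent [Fintype V] [DecidableEq V] (p : ℝ) (E : Set V → Prop) : ℝ :=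
  ∑ A : Finset V, if E ↑A then p ^ A.card * (1 - p) ^ (Fintype.card V - A.card) else 0

end Defs

/-- The `n`-dimensional Hamming graph on `[k]^n`: two vertices are adjacent iff they
differ in exactly one coordinate. -/
def hamming (n k : ℕ) : SimpleGraph (Fin n → Fin k) where
  Adj v w := (Finset.univ.filter fun i => v i ≠ w i).card = 1
  symm := by
    constructor
    intro v w h
    have e : (Finset.univ.filter fun i => w i ≠ v i) =
        Finset.univ.filter fun i => v i ≠ w i :=
      Finset.filter_congr fun i _ => ne_comm
    rw [e]; exact h
  loopless := by
    constructor
    intro v h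
    simp at h

/-- The vertex set of the projection of the Hamming graph specified by `S`:
coordinates with `S i = some a` are fixed to `a`, coordinates with `S i = none` are free. -/
def projSet {n k : ℕ} (S : Fin n → Option (Fin k)) : Set (Fin n → Fin k) :=
  {v | ∀ i : Fin n, ∀ a : Fin k, S i = some a → v i = a}

/-- The dimension of a projection: the number of free coordinates. -/
def projDim {n k : ℕ} (S : Fin n → Option (Fin k)) : ℕ :=
  (Finset.univ.filter fun i => S i = none).card

/-- Probability that the Hamming graph percolates from the `p`-random subset. -/
noncomputable def percProb (n k : ℕ) (p : ℝ) : ℝ :=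
  probEvent p (fun A => bootClosure (hamming n k) A = Set.univ)

/-- Probability that the projection `S` is internally spanned by the `p`-random subset. -/
noncomputable def intSpanProb (n k : ℕ) (p : ℝ) (S : Fin n → Option (Fin k)) : ℝ :=
  probEvent p (fun A => bootClosure (hamming n k) (A ∩ projSet S) = projSet S)

/-- `p_* = n^{-2} k^{-2√n + 1}`. -/
noncomputable def pStar (n k : ℕ) : ℝ :=
  (n : ℝ) ^ (-2 : ℝ) * (k : ℝ) ^ (-2 * Real.sqrt n + 1)

/-- The critical probability for 2-neighbour bootstrap percolation on the Hamming graph. -/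
noncomputable def pc (n k : ℕ) : ℝ :=
  sInf {p : ℝ | 0 < p ∧ p < 1 ∧ 1 / 2 ≤ percProb n k p}

/-- A canonical projection of dimension `m` (the first `m` coordinates are free,
the remaining ones are fixed to `x`). -/
def canonProj (n k m : ℕ) (x : Fin k) : Fin n → Option (Fin k) :=
  fun i => if (i : ℕ) < m then none else some x

/-- The set `I_{H,t}` of admissible indices `(ℓ, i, j, d)` for a projection of dimension `m`
and threshold `t`. -/
def indexSet (m t : ℕ) : Finset (ℕ × ℕ × ℕ × ℕ) :=
  ((Finset.range (m + 1)) ×ˢ (Finset.range (m + 1)) ×ˢ (Finset.range (m + 1)) ×ˢ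
      (Finset.range 3)).filter
    fun q => t ≤ q.1 ∧ q.1 ≤ min (q.2.1 + q.2.2.1 + q.2.2.2) m ∧
      q.2.2.1 ≤ q.2.1 ∧ q.2.1 < t ∧ q.2.1 + q.2.2.2 < q.1

/-- `U_{H,t}(ℓ,i,j,d)`: the number of candidate quadruples `(H_ℓ, {H_i, H_j}, d)` inside the
projection `SH` at threshold `t` with dimensions `ℓ, i, j` and distance `d`; the pair
`{H_i, H_j}` is unordered. -/
noncomputable def candCountIn (n k : ℕ) (SH : Fin n → Option (Fin k)) (t : ℕ)
    (q : ℕ × ℕ × ℕ × ℕ) : ℕ :=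
  Nat.card {c : (Fin n → Option (Fin k)) × Sym2 (Fin n → Option (Fin k)) //
    t ≤ q.1 ∧ q.2.2.1 ≤ q.2.1 ∧ q.2.1 < t ∧ q.2.2.2 ≤ 2 ∧
    projDim c.1 = q.1 ∧ projSet c.1 ⊆ projSet SH ∧
    ∃ a b, c.2 = s(a, b) ∧ projDim a = q.2.1 ∧ projDim b = q.2.2.1 ∧
      setDist (hamming n k) (projSet a) (projSet b) = q.2.2.2 ∧
      bootClosure (hamming n k) (projSet a ∪ projSet b) = projSet c.1}

/-- `U_{G,t}(ℓ,i,j,d)`: the number of candidate quadruples in the whole Hamming graph. -/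
noncomputable def candCount (n k t : ℕ) (q : ℕ × ℕ × ℕ × ℕ) : ℕ :=
  candCountIn n k (fun _ => none) t q

/-- The constants `Ψ_m`. -/
noncomputable def Psi (n k : ℕ) : ℕ → ℝ
  | 0 => 1
  | m + 1 =>
    if m + 1 ≤ 14 then (1 / 2) * (9 * Real.sqrt 2 / 10) ^ (m + 1)
    else Psi n k m * (1 + (k : ℝ) ^ (-(((m : ℝ) + 1) - 11) / 2)) * (1 + 4 / (n : ℝ))

/-- The function `Φ(m) = Ψ_m p^{m/2+1} m! 2^{-m/2} (k-1)^m k^{(m²+2m)/4}`. -/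
noncomputable def Phi (n k : ℕ) (p : ℝ) (m : ℕ) : ℝ :=
  Psi n k m * p ^ ((m : ℝ) / 2 + 1) * (Nat.factorial m : ℝ) * (2 : ℝ) ^ (-(m : ℝ) / 2) *
    ((k : ℝ) - 1) ^ m * (k : ℝ) ^ (((m : ℝ) ^ 2 + 2 * (m : ℝ)) / 4)

/-- `|S_{m-1}|`: the number of sequentially spanning sequences with `m` vertices
(i.e. of length `m - 1`) in the Hamming graph. -/
noncomputable def seqCount (n k m : ℕ) : ℕ :=
  Nat.card {v : Fin m → (Fin n → Fin k) // SeqSpanSeq (hamming n k) m v}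

/-- `|P_{ℓ,i}|`: the number of unordered pairs of sequentially spanning sequences of
length `ℓ` whose vertex sets intersect in exactly `i` vertices. -/
noncomputable def pairCount (n k ℓ i : ℕ) : ℕ :=
  Nat.card {q : Sym2 (Fin (ℓ + 1) → (Fin n → Fin k)) //
    ∃ a b, q = s(a, b) ∧ SeqSpanSeq (hamming n k) (ℓ + 1) a ∧
      SeqSpanSeq (hamming n k) (ℓ + 1) b ∧ (Set.range a ∩ Set.range b).ncard = i}

namespace Stmt4Aux

open Finset Function

/-! ### Generic bootstrap closure lemmas -/

section Generic
variable {V : Type*} {G : SimpleGraph V} {A B : Set V}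

lemma subset_bootStep : A ⊆ bootStep G A := Set.subset_union_left

lemma bootStep_mono (h : A ⊆ B) : bootStep G A ⊆ bootStep G B := by
  rintro v (hv | ⟨u, w, hne, hau, haw, hu, hw⟩)
  · exact Or.inl (h hv)
  · exact Or.inr ⟨u, w, hne, hau, haw, h hu, h hw⟩

lemma bootIter_mono_nat (G : SimpleGraph V) (A : Set V) : Monotone (bootIter G A) :=
  monotone_nat_of_le_succ fun _ => subset_bootStep

lemma subset_bootClosure : A ⊆ bootClosure G A :=
  Set.subset_iUnion (bootIter G A) 0

lemma mem_bootClosure_of_two {v u w : V} (hne : u ≠ w) (hu : G.Adj v u) (hw : G.Adj v w)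
    (hu' : u ∈ bootClosure G A) (hw' : w ∈ bootClosure G A) : v ∈ bootClosure G A := by
  obtain ⟨j₁, hj₁⟩ := Set.mem_iUnion.mp hu'
  obtain ⟨j₂, hj₂⟩ := Set.mem_iUnion.mp hw'
  refine Set.mem_iUnion.mpr ⟨max j₁ j₂ + 1, Or.inr ⟨u, w, hne, hu, hw, ?_, ?_⟩⟩
  · exact bootIter_mono_nat G A (le_max_left j₁ j₂) hj₁
  · exact bootIter_mono_nat G A (le_max_right j₁ j₂) hj₂

lemma bootClosure_subset_of_closed (hAB : A ⊆ B) (hB : bootStep G B ⊆ B) :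
    bootClosure G A ⊆ B := by
  refine Set.iUnion_subset fun j => ?_
  induction j with
  | zero => exact hAB
  | succ j ih => exact fun v hv => hB (bootStep_mono ih hv)

end Generic

/-! ### Hamming graph lemmas -/

variable {n k : ℕ}

/-- Number of differing coordinates. -/
noncomputable def diffCard (v w : Fin n → Fin k) : ℕ :=
  (Finset.univ.filter fun i => v i ≠ w i).card

lemma hamming_adj_iff {v w : Fin n → Fin k} :
    (hamming n k).Adj v w ↔ (Finset.univ.filter fun i => v i ≠ w i).card = 1 := Iff.rfl

lemma hamming_adj_update (v : Fin n → Fin k) (i : Fin n) (a : Fin k) (h : a ≠ v i) :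
    (hamming n k).Adj v (Function.update v i a) := by
  rw [hamming_adj_iff]
  have he : (Finset.univ.filter fun j => v j ≠ Function.update v i a j) = {i} := by
    ext j
    simp only [Finset.mem_filter, Finset.mem_univ, true_and, Finset.mem_singleton]
    rcases eq_or_ne j i with rfl | hji
    · simp [Function.update_self, Ne.symm h]
    · simp [Function.update_of_ne hji, hji]
  rw [he, Finset.card_singleton]

lemma hamming_adj_eq_off {v u : Fin n → Fin k} (h : (hamming n k).Adj v u) {i : Fin n}
    (hi : v i ≠ u i) : ∀ j, j ≠ i → v j = u j := by
  have hcard : (Finset.univ.filter fun j => v j ≠ u j).card = 1 := h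
  obtain ⟨c, hc⟩ := Finset.card_eq_one.mp hcard
  have hic : i ∈ ({c} : Finset (Fin n)) := by
    rw [← hc]; simp [hi]
  have hci : c = i := (Finset.mem_singleton.mp hic).symm
  intro j hj
  by_contra hne
  have : j ∈ ({c} : Finset (Fin n)) := by rw [← hc]; simp [hne]
  exact hj (by rw [Finset.mem_singleton.mp this, hci])

lemma diffCard_triangle (u v w : Fin n → Fin k) :
    diffCard u w ≤ diffCard u v + diffCard v w := by
  unfold diffCard
  calc (Finset.univ.filter fun i => u i ≠ w i).card
      ≤ ((Finset.univ.filter fun i => u i ≠ v i) ∪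
          (Finset.univ.filter fun i => v i ≠ w i)).card := by
        apply Finset.card_le_card
        intro i hi
        simp only [Finset.mem_filter, Finset.mem_univ, true_and] at hi
        simp only [Finset.mem_union, Finset.mem_filter, Finset.mem_univ, true_and]
        by_contra hcon
        push_neg at hcon
        exact hi (hcon.1.trans hcon.2)
    _ ≤ _ := Finset.card_union_le _ _

lemma diffCard_adj {v w : Fin n → Fin k} (h : (hamming n k).Adj v w) : diffCard v w = 1 := h

lemma diffCard_le_walk_length {u v : Fin n → Fin k} (p : (hamming n k).Walk u v) :
    diffCard u v ≤ p.length := by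
  induction p with
  | nil => simp [diffCard]
  | @cons a b c h p ih =>
      calc diffCard a c ≤ diffCard a b + diffCard b c := diffCard_triangle a b c
        _ ≤ 1 + p.length := by
            rw [diffCard_adj h]
            exact Nat.add_le_add_left ih 1
        _ = (SimpleGraph.Walk.cons h p).length := by
            simp [SimpleGraph.Walk.length_cons, Nat.add_comm]

lemma hamming_reachable (u v : Fin n → Fin k) : (hamming n k).Reachable u v := by
  generalize hD : diffCard u v = D
  induction D using Nat.strong_induction_on generalizing u with
  | _ D ih =>
    rcases Nat.eq_zero_or_pos D with rfl | hpos
    · have he : (Finset.univ.filter fun i => u i ≠ v i) = ∅ :=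
        Finset.card_eq_zero.mp hD
      have : u = v := by
        funext i
        by_contra hne
        have : i ∈ (Finset.univ.filter fun i => u i ≠ v i) := by simp [hne]
        simp [he] at this
      exact this ▸ SimpleGraph.Reachable.refl u
    · have hne : (Finset.univ.filter fun i => u i ≠ v i).Nonempty := by
        have h0 : 0 < diffCard u v := by omega
        unfold diffCard at h0
        exact Finset.card_pos.mp h0
      obtain ⟨i, hi⟩ := hne
      simp only [Finset.mem_filter, Finset.mem_univ, true_and] at hi
      set u' := Function.update u i (v i) with hu'
      have hadj : (hamming n k).Adj u u' := hamming_adj_update u i (v i) (Ne.symm hi)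
      have hdc : diffCard u' v = D - 1 := by
        have he : (Finset.univ.filter fun j => u' j ≠ v j) =
            (Finset.univ.filter fun j => u j ≠ v j).erase i := by
          ext j
          simp only [Finset.mem_filter, Finset.mem_univ, true_and, Finset.mem_erase]
          rcases eq_or_ne j i with rfl | hji
          · simp [hu', Function.update_self]
          · simp [hu', Function.update_of_ne hji, hji]
        unfold diffCard
        rw [he, Finset.card_erase_of_mem (by simp [hi]), ← hD]
        rfl
      have hr : (hamming n k).Reachable u' v := ih (D - 1) (by omega) u' hdc
      exact (hadj.reachable).trans hr

lemma diffCard_le_dist (u v : Fin n → Fin k) : diffCard u v ≤ (hamming n k).dist u v := by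
  obtain ⟨p, hp⟩ := (hamming_reachable u v).exists_walk_length_eq_dist
  rw [← hp]
  exact diffCard_le_walk_length p

/-! ### Projection lemmas -/

lemma mem_projSet_iff {S : Fin n → Option (Fin k)} {v : Fin n → Fin k} :
    v ∈ projSet S ↔ ∀ i a, S i = some a → v i = a := Iff.rfl

lemma projSet_nonempty (hk0 : 0 < k) (S : Fin n → Option (Fin k)) : (projSet S).Nonempty :=
  ⟨fun i => (S i).getD ⟨0, hk0⟩, fun i a ha => by simp [ha]⟩

lemma projSet_closed (S : Fin n → Option (Fin k)) :
    bootStep (hamming n k) (projSet S) ⊆ projSet S := by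
  rintro v (hv | ⟨u, w, hne, hau, haw, hu, hw⟩)
  · exact hv
  · intro i a ha
    by_contra hvi
    have hui : u i = a := hu i a ha
    have hwi : w i = a := hw i a ha
    have h1 : ∀ j, j ≠ i → v j = u j :=
      hamming_adj_eq_off hau (by rw [hui]; exact hvi)
    have h2 : ∀ j, j ≠ i → v j = w j :=
      hamming_adj_eq_off haw (by rw [hwi]; exact hvi)
    apply hne
    funext j
    rcases eq_or_ne j i with rfl | hj
    · rw [hui, hwi]
    · rw [← h1 j hj, h2 j hj]

/-! ### The minimal covering projection and conflict coordinates -/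

noncomputable def Smin (S₁ S₂ : Fin n → Option (Fin k)) : Fin n → Option (Fin k) :=
  fun i => if S₁ i = S₂ i then S₁ i else none

noncomputable def cSet (S₁ S₂ : Fin n → Option (Fin k)) : Finset (Fin n) :=
  Finset.univ.filter fun i => (S₁ i).isSome ∧ (S₂ i).isSome ∧ S₁ i ≠ S₂ i

noncomputable def Xv (S₁ S₂ : Fin n → Option (Fin k)) (v : Fin n → Fin k) : Finset (Fin n) :=
  Finset.univ.filter fun j => j ∉ cSet S₁ S₂ ∧ ∃ a, S₁ j = some a ∧ v j ≠ a

noncomputable def Yv (S₁ S₂ : Fin n → Option (Fin k)) (v : Fin n → Fin k) : Finset (Fin n) :=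
  Finset.univ.filter fun j => j ∉ cSet S₁ S₂ ∧ ∃ b, S₂ j = some b ∧ v j ≠ b

noncomputable def Dv1 (S₁ S₂ : Fin n → Option (Fin k)) (v : Fin n → Fin k) : Finset (Fin n) :=
  (cSet S₁ S₂).filter fun i => ∃ a, S₁ i = some a ∧ v i ≠ a

noncomputable def Dv2 (S₁ S₂ : Fin n → Option (Fin k)) (v : Fin n → Fin k) : Finset (Fin n) :=
  (cSet S₁ S₂).filter fun i => ∃ b, S₂ i = some b ∧ v i ≠ b

variable {S₁ S₂ : Fin n → Option (Fin k)} {v : Fin n → Fin k} {i j : Fin n}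

lemma mem_cSet : i ∈ cSet S₁ S₂ ↔ (S₁ i).isSome ∧ (S₂ i).isSome ∧ S₁ i ≠ S₂ i := by
  simp [cSet]

lemma mem_Xv : j ∈ Xv S₁ S₂ v ↔ j ∉ cSet S₁ S₂ ∧ ∃ a, S₁ j = some a ∧ v j ≠ a := by
  simp [Xv]

lemma mem_Yv : j ∈ Yv S₁ S₂ v ↔ j ∉ cSet S₁ S₂ ∧ ∃ b, S₂ j = some b ∧ v j ≠ b := by
  simp [Yv]

lemma mem_Dv1 : i ∈ Dv1 S₁ S₂ v ↔ i ∈ cSet S₁ S₂ ∧ ∃ a, S₁ i = some a ∧ v i ≠ a := by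
  simp [Dv1]

lemma mem_Dv2 : i ∈ Dv2 S₁ S₂ v ↔ i ∈ cSet S₁ S₂ ∧ ∃ b, S₂ i = some b ∧ v i ≠ b := by
  simp [Dv2]

lemma Smin_none_of_mem_cSet (h : i ∈ cSet S₁ S₂) : Smin S₁ S₂ i = none := by
  rw [mem_cSet] at h
  simp [Smin, h.2.2]

lemma S2_none_of_mem_Xv (hv : v ∈ projSet (Smin S₁ S₂)) (h : j ∈ Xv S₁ S₂ v) :
    S₂ j = none := by
  rw [mem_Xv] at h
  obtain ⟨hjc, a, ha, hne⟩ := h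
  rcases hS2 : S₂ j with _ | b
  · rfl
  · exfalso
    have heq : S₁ j = S₂ j := by
      by_contra hne'
      exact hjc (mem_cSet.mpr ⟨by simp [ha], by simp [hS2], hne'⟩)
    have hm : Smin S₁ S₂ j = some a := by simp only [Smin]; rw [if_pos heq, ha]
    exact hne (mem_projSet_iff.mp hv j a hm)

lemma S1_none_of_mem_Yv (hv : v ∈ projSet (Smin S₁ S₂)) (h : j ∈ Yv S₁ S₂ v) :
    S₁ j = none := by
  rw [mem_Yv] at h
  obtain ⟨hjc, b, hb, hne⟩ := h
  rcases hS1 : S₁ j with _ | a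
  · rfl
  · exfalso
    have heq : S₁ j = S₂ j := by
      by_contra hne'
      exact hjc (mem_cSet.mpr ⟨by simp [hS1], by simp [hb], hne'⟩)
    have hm : Smin S₁ S₂ j = some b := by simp only [Smin]; rw [if_pos heq, heq, hb]
    exact hne (mem_projSet_iff.mp hv j b hm)

lemma Smin_none_of_mem_Xv (hv : v ∈ projSet (Smin S₁ S₂)) (h : j ∈ Xv S₁ S₂ v) :
    Smin S₁ S₂ j = none := by
  have h2 := S2_none_of_mem_Xv hv h
  rw [mem_Xv] at h
  obtain ⟨-, a, ha, -⟩ := h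
  have : S₁ j ≠ S₂ j := by rw [ha, h2]; simp
  simp [Smin, this]

lemma Smin_none_of_mem_Yv (hv : v ∈ projSet (Smin S₁ S₂)) (h : j ∈ Yv S₁ S₂ v) :
    Smin S₁ S₂ j = none := by
  have h1 := S1_none_of_mem_Yv hv h
  rw [mem_Yv] at h
  obtain ⟨-, b, hb, -⟩ := h
  have : S₁ j ≠ S₂ j := by rw [hb, h1]; simp
  simp [Smin, this]

lemma projSmin_update (hv : v ∈ projSet (Smin S₁ S₂)) (h : Smin S₁ S₂ j = none) (c : Fin k) :
    Function.update v j c ∈ projSet (Smin S₁ S₂) := by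
  rw [mem_projSet_iff]
  intro i a ha
  rcases eq_or_ne i j with rfl | hij
  · rw [h] at ha; cases ha
  · rw [Function.update_of_ne hij]
    exact mem_projSet_iff.mp hv i a ha

/-! ### Effect of single-coordinate updates on the violation sets -/

lemma Xv_update_erase {a : Fin k} (hj : j ∈ Xv S₁ S₂ v) (ha : S₁ j = some a) :
    Xv S₁ S₂ (Function.update v j a) = (Xv S₁ S₂ v).erase j := by
  ext j'
  rcases eq_or_ne j' j with rfl | hne
  · rw [mem_Xv]
    constructor
    · rintro ⟨-, a', ha', hne'⟩
      rw [ha] at ha'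
      obtain rfl : a = a' := Option.some_inj.mp ha'
      exact absurd (Function.update_self j' a v) hne'
    · intro h
      exact absurd rfl (Finset.mem_erase.mp h).1
  · rw [mem_Xv, Finset.mem_erase, Function.update_of_ne hne, ← mem_Xv]
    simp [hne]

lemma Yv_update_erase {b : Fin k} (hj : j ∈ Yv S₁ S₂ v) (hb : S₂ j = some b) :
    Yv S₁ S₂ (Function.update v j b) = (Yv S₁ S₂ v).erase j := by
  ext j'
  rcases eq_or_ne j' j with rfl | hne
  · rw [mem_Yv]
    constructor
    · rintro ⟨-, b', hb', hne'⟩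
      rw [hb] at hb'
      obtain rfl : b = b' := Option.some_inj.mp hb'
      exact absurd (Function.update_self j' b v) hne'
    · intro h
      exact absurd rfl (Finset.mem_erase.mp h).1
  · rw [mem_Yv, Finset.mem_erase, Function.update_of_ne hne, ← mem_Yv]
    simp [hne]

lemma Xv_update_cSet {c : Fin k} (hi : i ∈ cSet S₁ S₂) :
    Xv S₁ S₂ (Function.update v i c) = Xv S₁ S₂ v := by
  ext j
  rcases eq_or_ne j i with rfl | hne
  · rw [mem_Xv, mem_Xv]
    simp [hi]
  · rw [mem_Xv, mem_Xv, Function.update_of_ne hne]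

lemma Yv_update_cSet {c : Fin k} (hi : i ∈ cSet S₁ S₂) :
    Yv S₁ S₂ (Function.update v i c) = Yv S₁ S₂ v := by
  ext j
  rcases eq_or_ne j i with rfl | hne
  · rw [mem_Yv, mem_Yv]
    simp [hi]
  · rw [mem_Yv, mem_Yv, Function.update_of_ne hne]

lemma Xv_update_none1 {c : Fin k} (h : S₁ j = none) :
    Xv S₁ S₂ (Function.update v j c) = Xv S₁ S₂ v := by
  ext j'
  rcases eq_or_ne j' j with rfl | hne
  · rw [mem_Xv, mem_Xv]
    simp [h]
  · rw [mem_Xv, mem_Xv, Function.update_of_ne hne]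

lemma Yv_update_none2 {c : Fin k} (h : S₂ j = none) :
    Yv S₁ S₂ (Function.update v j c) = Yv S₁ S₂ v := by
  ext j'
  rcases eq_or_ne j' j with rfl | hne
  · rw [mem_Yv, mem_Yv]
    simp [h]
  · rw [mem_Yv, mem_Yv, Function.update_of_ne hne]

lemma Dv1_update_notc {c : Fin k} (h : j ∉ cSet S₁ S₂) :
    Dv1 S₁ S₂ (Function.update v j c) = Dv1 S₁ S₂ v := by
  ext i
  rcases eq_or_ne i j with rfl | hne
  · rw [mem_Dv1, mem_Dv1]
    simp [h]
  · rw [mem_Dv1, mem_Dv1, Function.update_of_ne hne]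

lemma Dv2_update_notc {c : Fin k} (h : j ∉ cSet S₁ S₂) :
    Dv2 S₁ S₂ (Function.update v j c) = Dv2 S₁ S₂ v := by
  ext i
  rcases eq_or_ne i j with rfl | hne
  · rw [mem_Dv2, mem_Dv2]
    simp [h]
  · rw [mem_Dv2, mem_Dv2, Function.update_of_ne hne]

lemma Dv1_update_erase {a : Fin k} (hi : i ∈ Dv1 S₁ S₂ v) (ha : S₁ i = some a) :
    Dv1 S₁ S₂ (Function.update v i a) = (Dv1 S₁ S₂ v).erase i := by
  ext i'
  rcases eq_or_ne i' i with rfl | hne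
  · rw [mem_Dv1]
    constructor
    · rintro ⟨-, a', ha', hne'⟩
      rw [ha] at ha'
      obtain rfl : a = a' := Option.some_inj.mp ha'
      exact absurd (Function.update_self i' a v) hne'
    · intro h
      exact absurd rfl (Finset.mem_erase.mp h).1
  · rw [mem_Dv1, Finset.mem_erase, Function.update_of_ne hne, ← mem_Dv1]
    simp [hne]

lemma Dv2_update_erase {b : Fin k} (hi : i ∈ Dv2 S₁ S₂ v) (hb : S₂ i = some b) :
    Dv2 S₁ S₂ (Function.update v i b) = (Dv2 S₁ S₂ v).erase i := by
  ext i'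
  rcases eq_or_ne i' i with rfl | hne
  · rw [mem_Dv2]
    constructor
    · rintro ⟨-, b', hb', hne'⟩
      rw [hb] at hb'
      obtain rfl : b = b' := Option.some_inj.mp hb'
      exact absurd (Function.update_self i' b v) hne'
    · intro h
      exact absurd rfl (Finset.mem_erase.mp h).1
  · rw [mem_Dv2, Finset.mem_erase, Function.update_of_ne hne, ← mem_Dv2]
    simp [hne]

/-! ### Membership in the original projections -/

lemma mem_projSet1' (hv : v ∈ projSet (Smin S₁ S₂)) (hX : Xv S₁ S₂ v = ∅)
    (hD : ∀ i ∈ cSet S₁ S₂, ∀ a, S₁ i = some a → v i = a) : v ∈ projSet S₁ := by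
  rw [mem_projSet_iff]
  intro i a ha
  by_cases hic : i ∈ cSet S₁ S₂
  · exact hD i hic a ha
  · by_contra hne
    have : i ∈ Xv S₁ S₂ v := mem_Xv.mpr ⟨hic, a, ha, hne⟩
    simp [hX] at this

lemma mem_projSet2' (hv : v ∈ projSet (Smin S₁ S₂)) (hY : Yv S₁ S₂ v = ∅)
    (hD : ∀ i ∈ cSet S₁ S₂, ∀ b, S₂ i = some b → v i = b) : v ∈ projSet S₂ := by
  rw [mem_projSet_iff]
  intro i b hb
  by_cases hic : i ∈ cSet S₁ S₂
  · exact hD i hic b hb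
  · by_contra hne
    have : i ∈ Yv S₁ S₂ v := mem_Yv.mpr ⟨hic, b, hb, hne⟩
    simp [hY] at this

lemma projSet1_subset_Smin : projSet S₁ ⊆ projSet (Smin S₁ S₂) := by
  intro v hv
  rw [mem_projSet_iff]
  intro i a ha
  unfold Smin at ha
  by_cases h : S₁ i = S₂ i
  · rw [if_pos h] at ha
    exact mem_projSet_iff.mp hv i a ha
  · rw [if_neg h] at ha
    cases ha

lemma projSet2_subset_Smin : projSet S₂ ⊆ projSet (Smin S₁ S₂) := by
  intro v hv
  rw [mem_projSet_iff]
  intro i a ha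
  unfold Smin at ha
  by_cases h : S₁ i = S₂ i
  · rw [if_pos h, h] at ha
    exact mem_projSet_iff.mp hv i a ha
  · rw [if_neg h] at ha
    cases ha

lemma Dv1_empty_point (hD : Dv1 S₁ S₂ v = ∅) :
    ∀ i ∈ cSet S₁ S₂, ∀ a, S₁ i = some a → v i = a := by
  intro i hic a ha
  by_contra hne
  have : i ∈ Dv1 S₁ S₂ v := mem_Dv1.mpr ⟨hic, a, ha, hne⟩
  simp [hD] at this

lemma Dv2_empty_point (hD : Dv2 S₁ S₂ v = ∅) :
    ∀ i ∈ cSet S₁ S₂, ∀ b, S₂ i = some b → v i = b := by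
  intro i hic b hb
  by_contra hne
  have : i ∈ Dv2 S₁ S₂ v := mem_Dv2.mpr ⟨hic, b, hb, hne⟩
  simp [hD] at this

/-- Extract the two conflicting values at a conflict coordinate. -/
lemma cSet_values (h : i ∈ cSet S₁ S₂) :
    ∃ a b : Fin k, S₁ i = some a ∧ S₂ i = some b ∧ a ≠ b := by
  rw [mem_cSet] at h
  obtain ⟨a, ha⟩ := Option.isSome_iff_exists.mp h.1
  obtain ⟨b, hb⟩ := Option.isSome_iff_exists.mp h.2.1
  exact ⟨a, b, ha, hb, fun hab => h.2.2 (by rw [ha, hb, hab])⟩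

/-! ### Stage 1: vertices with no violations outside the conflict coordinates -/

lemma stage1 (hC2 : (cSet S₁ S₂).card ≤ 2) (hv : v ∈ projSet (Smin S₁ S₂))
    (hX : Xv S₁ S₂ v = ∅) (hY : Yv S₁ S₂ v = ∅) :
    v ∈ bootClosure (hamming n k) (projSet S₁ ∪ projSet S₂) := by
  have hcases : (cSet S₁ S₂).card = 0 ∨ (cSet S₁ S₂).card = 1 ∨ (cSet S₁ S₂).card = 2 := by
    omega
  rcases hcases with h0 | h1 | h2
  · -- no conflicts: v is already in the first projection
    have hc : cSet S₁ S₂ = ∅ := Finset.card_eq_zero.mp h0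
    refine subset_bootClosure (Or.inl (mem_projSet1' hv hX ?_))
    intro i hi
    simp [hc] at hi
  · -- one conflict coordinate
    obtain ⟨i₀, hc⟩ := Finset.card_eq_one.mp h1
    have hi₀ : i₀ ∈ cSet S₁ S₂ := by rw [hc]; exact Finset.mem_singleton_self i₀
    obtain ⟨a₀, b₀, ha₀, hb₀, hab₀⟩ := cSet_values hi₀
    have hmemc : ∀ i ∈ cSet S₁ S₂, i = i₀ := by
      intro i hi; rw [hc] at hi; exact Finset.mem_singleton.mp hi
    by_cases hva : v i₀ = a₀
    · refine subset_bootClosure (Or.inl (mem_projSet1' hv hX ?_))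
      intro i hi a ha
      obtain rfl := hmemc i hi
      rw [ha₀] at ha
      rw [hva, Option.some_inj.mp ha]
    by_cases hvb : v i₀ = b₀
    · refine subset_bootClosure (Or.inr (mem_projSet2' hv hY ?_))
      intro i hi b hb
      obtain rfl := hmemc i hi
      rw [hb₀] at hb
      rw [hvb, Option.some_inj.mp hb]
    · -- infect v from its two neighbours in the projections
      have hSm : Smin S₁ S₂ i₀ = none := Smin_none_of_mem_cSet hi₀
      have hu1 : Function.update v i₀ a₀ ∈ projSet S₁ := by
        refine mem_projSet1' (projSmin_update hv hSm a₀) ?_ ?_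
        · rw [Xv_update_cSet hi₀]; exact hX
        · intro i hi a ha
          obtain rfl := hmemc i hi
          rw [ha₀] at ha
          rw [Function.update_self, Option.some_inj.mp ha]
      have hw2 : Function.update v i₀ b₀ ∈ projSet S₂ := by
        refine mem_projSet2' (projSmin_update hv hSm b₀) ?_ ?_
        · rw [Yv_update_cSet hi₀]; exact hY
        · intro i hi b hb
          obtain rfl := hmemc i hi
          rw [hb₀] at hb
          rw [Function.update_self, Option.some_inj.mp hb]
      refine mem_bootClosure_of_two (v := v) ?_ ?_ ?_
        (subset_bootClosure (Or.inl hu1)) (subset_bootClosure (Or.inr hw2))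
      · intro h
        have := congrFun h i₀
        rw [Function.update_self, Function.update_self] at this
        exact hab₀ this
      · exact hamming_adj_update v i₀ a₀ (fun h => hva h.symm)
      · exact hamming_adj_update v i₀ b₀ (fun h => hvb h.symm)
  · -- two conflict coordinates: the grid argument
    obtain ⟨i₀, i₁, hne01, hc⟩ := Finset.card_eq_two.mp h2
    have hi₀ : i₀ ∈ cSet S₁ S₂ := by rw [hc]; simp
    have hi₁ : i₁ ∈ cSet S₁ S₂ := by rw [hc]; simp
    obtain ⟨a₀, b₀, ha₀, hb₀, hab₀⟩ := cSet_values hi₀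
    obtain ⟨a₁, b₁, ha₁, hb₁, hab₁⟩ := cSet_values hi₁
    have hmemc : ∀ i ∈ cSet S₁ S₂, i = i₀ ∨ i = i₁ := by
      intro i hi; rw [hc] at hi
      simpa using hi
    set W : Fin k → Fin k → (Fin n → Fin k) :=
      fun p q => Function.update (Function.update v i₀ p) i₁ q with hW
    have hWi₀ : ∀ p q, W p q i₀ = p := by
      intro p q
      show Function.update (Function.update v i₀ p) i₁ q i₀ = p
      rw [Function.update_of_ne hne01, Function.update_self]
    have hWi₁ : ∀ p q, W p q i₁ = q := by
      intro p q
      show Function.update (Function.update v i₀ p) i₁ q i₁ = q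
      rw [Function.update_self]
    have hupd₀ : ∀ p p' q, Function.update (W p q) i₀ p' = W p' q := by
      intro p p' q
      show Function.update (Function.update (Function.update v i₀ p) i₁ q) i₀ p' = _
      rw [Function.update_comm (Ne.symm hne01), Function.update_idem]
    have hupd₁ : ∀ p q q', Function.update (W p q) i₁ q' = W p q' := by
      intro p q q'
      show Function.update (Function.update (Function.update v i₀ p) i₁ q) i₁ q' = _
      rw [Function.update_idem]
    have hWmem : ∀ p q, W p q ∈ projSet (Smin S₁ S₂) := by
      intro p q
      exact projSmin_update (projSmin_update hv (Smin_none_of_mem_cSet hi₀) p)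
        (Smin_none_of_mem_cSet hi₁) q
    have hWX : ∀ p q, Xv S₁ S₂ (W p q) = ∅ := by
      intro p q
      show Xv S₁ S₂ (Function.update (Function.update v i₀ p) i₁ q) = ∅
      rw [Xv_update_cSet hi₁, Xv_update_cSet hi₀]
      exact hX
    have hWY : ∀ p q, Yv S₁ S₂ (W p q) = ∅ := by
      intro p q
      show Yv S₁ S₂ (Function.update (Function.update v i₀ p) i₁ q) = ∅
      rw [Yv_update_cSet hi₁, Yv_update_cSet hi₀]
      exact hY
    have hW1 : W a₀ a₁ ∈ projSet S₁ := by
      refine mem_projSet1' (hWmem a₀ a₁) (hWX a₀ a₁) ?_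
      intro i hi a ha
      rcases hmemc i hi with rfl | rfl
      · rw [ha₀] at ha; rw [hWi₀, Option.some_inj.mp ha]
      · rw [ha₁] at ha; rw [hWi₁, Option.some_inj.mp ha]
    have hW2 : W b₀ b₁ ∈ projSet S₂ := by
      refine mem_projSet2' (hWmem b₀ b₁) (hWY b₀ b₁) ?_
      intro i hi b hb
      rcases hmemc i hi with rfl | rfl
      · rw [hb₀] at hb; rw [hWi₀, Option.some_inj.mp hb]
      · rw [hb₁] at hb; rw [hWi₁, Option.some_inj.mp hb]
    have hWne₀ : ∀ p p' q q', p ≠ p' → W p q ≠ W p' q' := by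
      intro p p' q q' hne h
      exact hne (by rw [← hWi₀ p q, ← hWi₀ p' q', h])
    have hWne₁ : ∀ p p' q q', q ≠ q' → W p q ≠ W p' q' := by
      intro p p' q q' hne h
      exact hne (by rw [← hWi₁ p q, ← hWi₁ p' q', h])
    have hadj₀ : ∀ p p' q, p ≠ p' → (hamming n k).Adj (W p q) (W p' q) := by
      intro p p' q hne
      rw [← hupd₀ p p' q]
      exact hamming_adj_update (W p q) i₀ p' (by rw [hWi₀]; exact Ne.symm hne)
    have hadj₁ : ∀ p q q', q ≠ q' → (hamming n k).Adj (W p q) (W p q') := by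
      intro p q q' hne
      rw [← hupd₁ p q q']
      exact hamming_adj_update (W p q) i₁ q' (by rw [hWi₁]; exact Ne.symm hne)
    set CLs := bootClosure (hamming n k) (projSet S₁ ∪ projSet S₂) with hCLs
    have h1 : W a₀ a₁ ∈ CLs := subset_bootClosure (Or.inl hW1)
    have h2 : W b₀ b₁ ∈ CLs := subset_bootClosure (Or.inr hW2)
    have h3 : W a₀ b₁ ∈ CLs := by
      refine mem_bootClosure_of_two (hWne₀ a₀ b₀ a₁ b₁ hab₀) ?_ ?_ h1 h2
      · exact hadj₁ a₀ b₁ a₁ (Ne.symm hab₁)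
      · exact hadj₀ a₀ b₀ b₁ hab₀
    have h4 : W b₀ a₁ ∈ CLs := by
      refine mem_bootClosure_of_two (hWne₀ a₀ b₀ a₁ b₁ hab₀) ?_ ?_ h1 h2
      · exact hadj₀ b₀ a₀ a₁ (Ne.symm hab₀)
      · exact hadj₁ b₀ a₁ b₁ hab₁
    have h5 : ∀ q, W a₀ q ∈ CLs := by
      intro q
      by_cases hq : q = a₁
      · rw [hq]; exact h1
      by_cases hq' : q = b₁
      · rw [hq']; exact h3
      · refine mem_bootClosure_of_two (hWne₁ a₀ a₀ a₁ b₁ hab₁) ?_ ?_ h1 h3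
        · exact hadj₁ a₀ q a₁ (fun h => hq h)
        · exact hadj₁ a₀ q b₁ (fun h => hq' h)
    have h6 : ∀ q, W b₀ q ∈ CLs := by
      intro q
      by_cases hq : q = a₁
      · rw [hq]; exact h4
      by_cases hq' : q = b₁
      · rw [hq']; exact h2
      · refine mem_bootClosure_of_two (hWne₁ b₀ b₀ a₁ b₁ hab₁) ?_ ?_ h4 h2
        · exact hadj₁ b₀ q a₁ (fun h => hq h)
        · exact hadj₁ b₀ q b₁ (fun h => hq' h)
    have h7 : ∀ p q, W p q ∈ CLs := by
      intro p q
      by_cases hp : p = a₀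
      · rw [hp]; exact h5 q
      by_cases hp' : p = b₀
      · rw [hp']; exact h6 q
      · refine mem_bootClosure_of_two (hWne₀ a₀ b₀ q q hab₀) ?_ ?_ (h5 q) (h6 q)
        · exact hadj₀ p a₀ q (fun h => hp h)
        · exact hadj₀ p b₀ q (fun h => hp' h)
    have hveq : v = W (v i₀) (v i₁) := by
      show v = Function.update (Function.update v i₀ (v i₀)) i₁ (v i₁)
      simp only [Function.update_eq_self]
    rw [hveq]
    exact h7 _ _

/-! ### Claim A: vertices with no `S₂`-violations outside the conflicts are infected -/

lemma claimA (hC2 : (cSet S₁ S₂).card ≤ 2) :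
    ∀ N : ℕ, ∀ x : Fin n → Fin k, x ∈ projSet (Smin S₁ S₂) → Yv S₁ S₂ x = ∅ →
      (Xv S₁ S₂ x).card + (Dv2 S₁ S₂ x).card ≤ N →
      x ∈ bootClosure (hamming n k) (projSet S₁ ∪ projSet S₂) := by
  intro N
  induction N with
  | zero =>
    intro x hx hY hle
    have hD : Dv2 S₁ S₂ x = ∅ := Finset.card_eq_zero.mp (by omega)
    exact subset_bootClosure (Or.inr (mem_projSet2' hx hY (Dv2_empty_point hD)))
  | succ N ih =>
    intro x hx hY hle
    by_cases hX : Xv S₁ S₂ x = ∅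
    · exact stage1 hC2 hx hX hY
    by_cases hD : Dv2 S₁ S₂ x = ∅
    · exact subset_bootClosure (Or.inr (mem_projSet2' hx hY (Dv2_empty_point hD)))
    · obtain ⟨j, hjX⟩ := Finset.nonempty_iff_ne_empty.mpr hX
      obtain ⟨i, hiD⟩ := Finset.nonempty_iff_ne_empty.mpr hD
      obtain ⟨hjc, a, ha, hja⟩ := mem_Xv.mp hjX
      obtain ⟨hic, b, hb, hib⟩ := mem_Dv2.mp hiD
      have hij : j ≠ i := fun h => hjc (h ▸ hic)
      have hS2j : S₂ j = none := S2_none_of_mem_Xv hx hjX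
      have hu_mem : Function.update x j a ∈ projSet (Smin S₁ S₂) :=
        projSmin_update hx (Smin_none_of_mem_Xv hx hjX) a
      have hu_Y : Yv S₁ S₂ (Function.update x j a) = ∅ := by
        rw [Yv_update_none2 hS2j]; exact hY
      have hu_le : (Xv S₁ S₂ (Function.update x j a)).card
          + (Dv2 S₁ S₂ (Function.update x j a)).card ≤ N := by
        rw [Xv_update_erase hjX ha, Dv2_update_notc hjc, Finset.card_erase_of_mem hjX]
        have hpos : 0 < (Xv S₁ S₂ x).card := Finset.card_pos.mpr ⟨j, hjX⟩
        omega
      have hw_mem : Function.update x i b ∈ projSet (Smin S₁ S₂) :=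
        projSmin_update hx (Smin_none_of_mem_cSet hic) b
      have hw_Y : Yv S₁ S₂ (Function.update x i b) = ∅ := by
        rw [Yv_update_cSet hic]; exact hY
      have hw_le : (Xv S₁ S₂ (Function.update x i b)).card
          + (Dv2 S₁ S₂ (Function.update x i b)).card ≤ N := by
        rw [Xv_update_cSet hic, Dv2_update_erase hiD hb, Finset.card_erase_of_mem hiD]
        have hpos : 0 < (Dv2 S₁ S₂ x).card := Finset.card_pos.mpr ⟨i, hiD⟩
        omega
      refine mem_bootClosure_of_two ?_ ?_ ?_
        (ih _ hu_mem hu_Y hu_le) (ih _ hw_mem hw_Y hw_le)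
      · intro h
        have hcf := congrFun h j
        rw [Function.update_self, Function.update_of_ne hij] at hcf
        exact hja hcf.symm
      · exact hamming_adj_update x j a (fun h => hja h.symm)
      · exact hamming_adj_update x i b (fun h => hib h.symm)

/-! ### Claim B: the mirror statement -/

lemma claimB (hC2 : (cSet S₁ S₂).card ≤ 2) :
    ∀ N : ℕ, ∀ x : Fin n → Fin k, x ∈ projSet (Smin S₁ S₂) → Xv S₁ S₂ x = ∅ →
      (Yv S₁ S₂ x).card + (Dv1 S₁ S₂ x).card ≤ N →
      x ∈ bootClosure (hamming n k) (projSet S₁ ∪ projSet S₂) := by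
  intro N
  induction N with
  | zero =>
    intro x hx hX hle
    have hD : Dv1 S₁ S₂ x = ∅ := Finset.card_eq_zero.mp (by omega)
    exact subset_bootClosure (Or.inl (mem_projSet1' hx hX (Dv1_empty_point hD)))
  | succ N ih =>
    intro x hx hX hle
    by_cases hY : Yv S₁ S₂ x = ∅
    · exact stage1 hC2 hx hX hY
    by_cases hD : Dv1 S₁ S₂ x = ∅
    · exact subset_bootClosure (Or.inl (mem_projSet1' hx hX (Dv1_empty_point hD)))
    · obtain ⟨j, hjY⟩ := Finset.nonempty_iff_ne_empty.mpr hY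
      obtain ⟨i, hiD⟩ := Finset.nonempty_iff_ne_empty.mpr hD
      obtain ⟨hjc, b, hb, hjb⟩ := mem_Yv.mp hjY
      obtain ⟨hic, a, ha, hia⟩ := mem_Dv1.mp hiD
      have hij : j ≠ i := fun h => hjc (h ▸ hic)
      have hS1j : S₁ j = none := S1_none_of_mem_Yv hx hjY
      have hu_mem : Function.update x j b ∈ projSet (Smin S₁ S₂) :=
        projSmin_update hx (Smin_none_of_mem_Yv hx hjY) b
      have hu_X : Xv S₁ S₂ (Function.update x j b) = ∅ := by
        rw [Xv_update_none1 hS1j]; exact hX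
      have hu_le : (Yv S₁ S₂ (Function.update x j b)).card
          + (Dv1 S₁ S₂ (Function.update x j b)).card ≤ N := by
        rw [Yv_update_erase hjY hb, Dv1_update_notc hjc, Finset.card_erase_of_mem hjY]
        have hpos : 0 < (Yv S₁ S₂ x).card := Finset.card_pos.mpr ⟨j, hjY⟩
        omega
      have hw_mem : Function.update x i a ∈ projSet (Smin S₁ S₂) :=
        projSmin_update hx (Smin_none_of_mem_cSet hic) a
      have hw_X : Xv S₁ S₂ (Function.update x i a) = ∅ := by
        rw [Xv_update_cSet hic]; exact hX
      have hw_le : (Yv S₁ S₂ (Function.update x i a)).card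
          + (Dv1 S₁ S₂ (Function.update x i a)).card ≤ N := by
        rw [Yv_update_cSet hic, Dv1_update_erase hiD ha, Finset.card_erase_of_mem hiD]
        have hpos : 0 < (Dv1 S₁ S₂ x).card := Finset.card_pos.mpr ⟨i, hiD⟩
        omega
      refine mem_bootClosure_of_two ?_ ?_ ?_
        (ih _ hu_mem hu_X hu_le) (ih _ hw_mem hw_X hw_le)
      · intro h
        have hcf := congrFun h j
        rw [Function.update_self, Function.update_of_ne hij] at hcf
        exact hjb hcf.symm
      · exact hamming_adj_update x j b (fun h => hjb h.symm)
      · exact hamming_adj_update x i a (fun h => hia h.symm)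

/-! ### The spanning theorem -/

lemma span_subset (hC2 : (cSet S₁ S₂).card ≤ 2) :
    projSet (Smin S₁ S₂) ⊆ bootClosure (hamming n k) (projSet S₁ ∪ projSet S₂) := by
  suffices h : ∀ N : ℕ, ∀ x : Fin n → Fin k, x ∈ projSet (Smin S₁ S₂) →
      (Xv S₁ S₂ x).card + (Yv S₁ S₂ x).card ≤ N →
      x ∈ bootClosure (hamming n k) (projSet S₁ ∪ projSet S₂) by
    intro x hx
    exact h _ x hx le_rfl
  intro N
  induction N with
  | zero =>
    intro x hx hle
    have hX : Xv S₁ S₂ x = ∅ := Finset.card_eq_zero.mp (by omega)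
    have hY : Yv S₁ S₂ x = ∅ := Finset.card_eq_zero.mp (by omega)
    exact stage1 hC2 hx hX hY
  | succ N ih =>
    intro x hx hle
    by_cases hX : Xv S₁ S₂ x = ∅
    · exact claimB hC2 _ x hx hX le_rfl
    by_cases hY : Yv S₁ S₂ x = ∅
    · exact claimA hC2 _ x hx hY le_rfl
    · obtain ⟨j, hjX⟩ := Finset.nonempty_iff_ne_empty.mpr hX
      obtain ⟨j', hjY⟩ := Finset.nonempty_iff_ne_empty.mpr hY
      obtain ⟨hjc, a, ha, hja⟩ := mem_Xv.mp hjX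
      obtain ⟨hjc', b, hb, hjb⟩ := mem_Yv.mp hjY
      have hS2j : S₂ j = none := S2_none_of_mem_Xv hx hjX
      have hS1j' : S₁ j' = none := S1_none_of_mem_Yv hx hjY
      have hjj' : j ≠ j' := by
        intro h
        rw [h, hb] at hS2j
        cases hS2j
      have hu_mem : Function.update x j a ∈ projSet (Smin S₁ S₂) :=
        projSmin_update hx (Smin_none_of_mem_Xv hx hjX) a
      have hu_le : (Xv S₁ S₂ (Function.update x j a)).card
          + (Yv S₁ S₂ (Function.update x j a)).card ≤ N := by
        rw [Xv_update_erase hjX ha, Yv_update_none2 hS2j, Finset.card_erase_of_mem hjX]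
        have hpos : 0 < (Xv S₁ S₂ x).card := Finset.card_pos.mpr ⟨j, hjX⟩
        omega
      have hw_mem : Function.update x j' b ∈ projSet (Smin S₁ S₂) :=
        projSmin_update hx (Smin_none_of_mem_Yv hx hjY) b
      have hw_le : (Xv S₁ S₂ (Function.update x j' b)).card
          + (Yv S₁ S₂ (Function.update x j' b)).card ≤ N := by
        rw [Xv_update_none1 hS1j', Yv_update_erase hjY hb, Finset.card_erase_of_mem hjY]
        have hpos : 0 < (Yv S₁ S₂ x).card := Finset.card_pos.mpr ⟨j', hjY⟩
        omega
      refine mem_bootClosure_of_two ?_ ?_ ?_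
        (ih _ hu_mem hu_le) (ih _ hw_mem hw_le)
      · intro h
        have hcf := congrFun h j
        rw [Function.update_self, Function.update_of_ne hjj'] at hcf
        exact hja hcf.symm
      · exact hamming_adj_update x j a (fun h => hja h.symm)
      · exact hamming_adj_update x j' b (fun h => hjb h.symm)

lemma main_span (hC2 : (cSet S₁ S₂).card ≤ 2) :
    bootClosure (hamming n k) (projSet S₁ ∪ projSet S₂) = projSet (Smin S₁ S₂) := by
  apply Set.Subset.antisymm
  · exact bootClosure_subset_of_closed
      (Set.union_subset projSet1_subset_Smin projSet2_subset_Smin) (projSet_closed _)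
  · exact span_subset hC2

/-! ### Dimension and distance bounds -/

lemma projDim_Smin_le : projDim (Smin S₁ S₂) ≤ projDim S₁ + projDim S₂ + (cSet S₁ S₂).card := by
  unfold projDim
  have hsub : (Finset.univ.filter fun i => Smin S₁ S₂ i = none) ⊆
      ((Finset.univ.filter fun i => S₁ i = none) ∪ (Finset.univ.filter fun i => S₂ i = none))
        ∪ cSet S₁ S₂ := by
    intro i hi
    simp only [Finset.mem_filter, Finset.mem_univ, true_and] at hi
    rw [Finset.mem_union, Finset.mem_union]
    by_cases h1 : S₁ i = none
    · exact Or.inl (Or.inl (by simp [h1]))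
    by_cases h2 : S₂ i = none
    · exact Or.inl (Or.inr (by simp [h2]))
    · refine Or.inr (mem_cSet.mpr ⟨Option.ne_none_iff_isSome.mp h1,
        Option.ne_none_iff_isSome.mp h2, ?_⟩)
      intro heq
      simp only [Smin] at hi
      rw [if_pos heq] at hi
      exact h1 hi
  refine le_trans (Finset.card_le_card hsub) ?_
  refine le_trans (Finset.card_union_le _ _) ?_
  have hle := Finset.card_union_le (Finset.univ.filter fun i => S₁ i = none)
    (Finset.univ.filter fun i => S₂ i = none)
  omega

lemma cSet_card_le_setDist (hk0 : 0 < k) :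
    (cSet S₁ S₂).card ≤ setDist (hamming n k) (projSet S₁) (projSet S₂) := by
  obtain ⟨u₀, hu₀⟩ := projSet_nonempty hk0 S₁
  obtain ⟨v₀, hv₀⟩ := projSet_nonempty hk0 S₂
  have hne : {d | ∃ u ∈ projSet S₁, ∃ w ∈ projSet S₂, (hamming n k).dist u w = d}.Nonempty :=
    ⟨(hamming n k).dist u₀ v₀, u₀, hu₀, v₀, hv₀, rfl⟩
  obtain ⟨u, hu, w, hw, hd⟩ := Nat.sInf_mem hne
  show (cSet S₁ S₂).card
      ≤ sInf {d | ∃ u ∈ projSet S₁, ∃ w ∈ projSet S₂, (hamming n k).dist u w = d}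
  rw [← hd]
  have hsub : cSet S₁ S₂ ⊆ Finset.univ.filter fun i => u i ≠ w i := by
    intro i hi
    obtain ⟨a, b, ha, hb, hab⟩ := cSet_values hi
    simp only [Finset.mem_filter, Finset.mem_univ, true_and]
    rw [mem_projSet_iff] at hu hw
    rw [hu i a ha, hw i b hb]
    exact hab
  exact le_trans (Finset.card_le_card hsub) (diffCard_le_dist u w)

end Stmt4Aux


theorem stmt4 (n k : ℕ) (hk : 2 ≤ k) (S₁ S₂ : Fin n → Option (Fin k))
    (hd : setDist (hamming n k) (projSet S₁) (projSet S₂) ≤ 2) :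
    ∃ S : Fin n → Option (Fin k),
      projDim S ≤ projDim S₁ + projDim S₂ + setDist (hamming n k) (projSet S₁) (projSet S₂) ∧
      bootClosure (hamming n k) (projSet S₁ ∪ projSet S₂) = projSet S := by
  have hk0 : 0 < k := by omega
  have hcd := Stmt4Aux.cSet_card_le_setDist (S₁ := S₁) (S₂ := S₂) hk0
  refine ⟨Stmt4Aux.Smin S₁ S₂, ?_, ?_⟩
  · have h1 := Stmt4Aux.projDim_Smin_le (S₁ := S₁) (S₂ := S₂)
    omega
  · exact Stmt4Aux.main_span (le_trans hcd hd)
end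

section
/- Let U be a sequentially spanning subset of the vertex set of the n-dimensional Hamming graph G = □_{i=1}^n K_k. Then there exists a projection H of G with dim(H) = 2(|U| − 1) such that the 2-neighbour bootstrap closure of U equals V(H). -/
open scoped Classical

section Helpers

variable {V : Type*} {G : SimpleGraph V}

lemma mem_bootStep {A : Set V} {x : V} :
    x ∈ bootStep G A ↔ x ∈ A ∨ ∃ u w, u ≠ w ∧ G.Adj x u ∧ G.Adj x w ∧ u ∈ A ∧ w ∈ A :=
  Iff.rfl

lemma subset_bootStep (A : Set V) : A ⊆ bootStep G A := Set.subset_union_left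

lemma bootStep_mono {A B : Set V} (h : A ⊆ B) : bootStep G A ⊆ bootStep G B := by
  rintro x (hx | ⟨u, w, huw, h1, h2, hu, hw⟩)
  · exact Or.inl (h hx)
  · exact Or.inr ⟨u, w, huw, h1, h2, h hu, h hw⟩

lemma bootIter_mono (A : Set V) : ∀ {j j' : ℕ}, j ≤ j' → bootIter G A j ⊆ bootIter G A j' := by
  intro j j' h
  induction j' with
  | zero => rw [Nat.le_zero.mp h]
  | succ j' ih =>
    rcases Nat.lt_or_ge j (j' + 1) with h' | h'
    · exact (ih (Nat.lt_succ_iff.mp h')).trans (subset_bootStep _)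
    · rw [le_antisymm h h']

lemma subset_bootClosure (A : Set V) : A ⊆ bootClosure G A :=
  Set.subset_iUnion (bootIter G A) 0

lemma mem_bootClosure {A : Set V} {x : V} :
    x ∈ bootClosure G A ↔ ∃ j, x ∈ bootIter G A j := Set.mem_iUnion

lemma bootStep_bootClosure (A : Set V) :
    bootStep G (bootClosure G A) ⊆ bootClosure G A := by
  rintro x (hx | ⟨u, w, huw, h1, h2, hu, hw⟩)
  · exact hx
  · obtain ⟨j1, hj1⟩ := mem_bootClosure.mp hu
    obtain ⟨j2, hj2⟩ := mem_bootClosure.mp hw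
    exact mem_bootClosure.mpr ⟨max j1 j2 + 1,
      Or.inr ⟨u, w, huw, h1, h2, bootIter_mono A (le_max_left _ _) hj1,
        bootIter_mono A (le_max_right _ _) hj2⟩⟩

lemma bootStep_subset_bootClosure (A : Set V) : bootStep G A ⊆ bootClosure G A :=
  Set.subset_iUnion (bootIter G A) 1

lemma bootClosure_subset_of_closed {A B : Set V} (hAB : A ⊆ B)
    (hB : bootStep G B ⊆ B) : bootClosure G A ⊆ B := by
  refine Set.iUnion_subset fun j => ?_
  induction j with
  | zero => exact hAB
  | succ j ih => exact (bootStep_mono ih).trans hB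

lemma bootClosure_mono {A B : Set V} (h : A ⊆ B) : bootClosure G A ⊆ bootClosure G B :=
  bootClosure_subset_of_closed (h.trans (subset_bootClosure B)) (bootStep_bootClosure B)

lemma bootClosure_idem (A : Set V) :
    bootClosure G (bootClosure G A) = bootClosure G A :=
  le_antisymm (bootClosure_subset_of_closed subset_rfl (bootStep_bootClosure A))
    (subset_bootClosure _)

lemma bootClosure_union_closure (A C : Set V) :
    bootClosure G (bootClosure G A ∪ C) = bootClosure G (A ∪ C) := by
  apply le_antisymm
  · refine bootClosure_subset_of_closed (Set.union_subset ?_ ?_) (bootStep_bootClosure _)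
    · exact bootClosure_mono Set.subset_union_left
    · exact Set.subset_union_right.trans (subset_bootClosure _)
  · exact bootClosure_mono (Set.union_subset_union_left C (subset_bootClosure A))

lemma bootClosure_singleton (v : V) : bootClosure G {v} = {v} := by
  apply le_antisymm
  · refine bootClosure_subset_of_closed subset_rfl ?_
    rintro x (hx | ⟨u, w, huw, _, _, hu, hw⟩)
    · exact hx
    · exact absurd (hu.trans hw.symm) huw
  · exact subset_bootClosure _

end Helpers

section HammingHelpers

variable {n k : ℕ}

def hdist (v w : Fin n → Fin k) : ℕ := (Finset.univ.filter fun i => v i ≠ w i).card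

lemma hamming_adj {v w : Fin n → Fin k} : (hamming n k).Adj v w ↔ hdist v w = 1 := Iff.rfl

lemma hdist_eq_zero {v w : Fin n → Fin k} : hdist v w = 0 ↔ v = w := by
  unfold hdist
  simp [Finset.card_eq_zero, Finset.filter_eq_empty_iff, funext_iff]

lemma hdist_triangle (u v w : Fin n → Fin k) : hdist u w ≤ hdist u v + hdist v w := by
  unfold hdist
  refine le_trans (Finset.card_le_card ?_) (Finset.card_union_le _ _)
  intro i hi
  simp only [Finset.mem_filter, Finset.mem_union, Finset.mem_univ, true_and] at *
  by_contra h
  push_neg at h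
  rw [h.1, h.2] at hi
  exact hi rfl

lemma adj_update {v : Fin n → Fin k} {i : Fin n} {a : Fin k} (h : a ≠ v i) :
    (hamming n k).Adj v (Function.update v i a) := by
  show (Finset.univ.filter fun j => v j ≠ Function.update v i a j).card = 1
  have e : (Finset.univ.filter fun j => v j ≠ Function.update v i a j) = {i} := by
    ext j
    rcases eq_or_ne j i with rfl | hj
    · simp [Function.update_apply, h.symm]
    · simp [Function.update_apply, hj]
  rw [e, Finset.card_singleton]

lemma adj_update_update {v : Fin n → Fin k} {i : Fin n} {c c' : Fin k} (h : c' ≠ c) :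
    (hamming n k).Adj (Function.update v i c) (Function.update v i c') := by
  have : Function.update v i c' = Function.update (Function.update v i c) i c' := by
    simp [Function.update_idem]
  rw [this]
  exact adj_update (by simpa using h)

lemma hdist_le_walk_length {u w : Fin n → Fin k} (p : (hamming n k).Walk u w) :
    hdist u w ≤ p.length := by
  induction p with
  | nil => simp [hdist_eq_zero.mpr rfl]
  | @cons a b c hadj p ih =>
    have h1 : hdist a b = 1 := hadj
    calc hdist a c ≤ hdist a b + hdist b c := hdist_triangle a b c
      _ ≤ 1 + p.length := by rw [h1]; omega
      _ = (SimpleGraph.Walk.cons hadj p).length := by simp [Nat.add_comm]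

lemma exists_walk_of_hdist : ∀ (d : ℕ) (u w : Fin n → Fin k), hdist u w = d →
    ∃ p : (hamming n k).Walk u w, p.length = d := by
  intro d
  induction d with
  | zero =>
    intro u w h
    obtain rfl := hdist_eq_zero.mp h
    exact ⟨.nil, rfl⟩
  | succ d ih =>
    intro u w h
    have hne : (Finset.univ.filter fun i => u i ≠ w i).Nonempty := by
      rw [← Finset.card_pos]
      unfold hdist at h
      omega
    obtain ⟨i, hi⟩ := hne
    have hiw : u i ≠ w i := (Finset.mem_filter.mp hi).2
    have hadj : (hamming n k).Adj u (Function.update u i (w i)) := adj_update hiw.symm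
    have hd' : hdist (Function.update u i (w i)) w = d := by
      have e : (Finset.univ.filter fun j => Function.update u i (w i) j ≠ w j)
          = (Finset.univ.filter fun j => u j ≠ w j).erase i := by
        ext j
        rcases eq_or_ne j i with rfl | hj
        · simp [Function.update_apply]
        · simp [Function.update_apply, hj]
      unfold hdist at h ⊢
      rw [e, Finset.card_erase_of_mem hi, h]
      omega
    obtain ⟨p, hp⟩ := ih _ w hd'
    exact ⟨.cons hadj p, by simp [hp]⟩

lemma hamming_dist_eq (u w : Fin n → Fin k) : (hamming n k).dist u w = hdist u w := by
  obtain ⟨p, hp⟩ := exists_walk_of_hdist (hdist u w) u w rfl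
  refine le_antisymm (hp ▸ SimpleGraph.dist_le p) ?_
  obtain ⟨q, hq⟩ := SimpleGraph.Reachable.exists_walk_length_eq_dist p.reachable
  exact hq ▸ hdist_le_walk_length q

end HammingHelpers

section ProjHelpers

variable {n k : ℕ}

lemma projSet_closed (S : Fin n → Option (Fin k)) :
    bootStep (hamming n k) (projSet S) ⊆ projSet S := by
  rintro w (hw | ⟨u1, u2, hne, h1, h2, hu1, hu2⟩)
  · exact hw
  by_contra hw
  simp only [projSet, Set.mem_setOf_eq] at hw
  push_neg at hw
  obtain ⟨j, a, hSj, hwj⟩ := hw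
  have key : ∀ u, (hamming n k).Adj w u → u ∈ projSet S → u = Function.update w j a := by
    intro u hadj hu
    have haj : u j = a := hu j a hSj
    have hj : j ∈ Finset.univ.filter fun i => w i ≠ u i := by
      simp [haj, hwj]
    obtain ⟨x, hx⟩ := Finset.card_eq_one.mp (hamming_adj.mp hadj)
    rw [hx] at hj
    obtain rfl := Finset.mem_singleton.mp hj
    funext i
    rcases eq_or_ne i j with rfl | hij
    · simp [haj]
    · have hni : i ∉ ({j} : Finset (Fin n)) := by simpa using hij
      rw [← hx] at hni
      simp only [Finset.mem_filter, Finset.mem_univ, true_and, not_not] at hni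
      rw [Function.update_apply, if_neg hij]
      exact hni.symm
  exact hne ((key u1 h1 hu1).trans (key u2 h2 hu2).symm)

lemma projSet_nonempty_mem (S : Fin n → Option (Fin k)) (v : Fin n → Fin k) :
    (fun i => (S i).getD (v i)) ∈ projSet S := by
  intro i a h
  simp [h]

lemma setDist_projSet_eq (S : Fin n → Option (Fin k)) (v : Fin n → Fin k) :
    setDist (hamming n k) (projSet S) {v} =
      (Finset.univ.filter fun i => ∃ a, S i = some a ∧ v i ≠ a).card := by
  classical
  set p : Fin n → Fin k := fun i => (S i).getD (v i) with hpdef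
  have hp : p ∈ projSet S := projSet_nonempty_mem S v
  have hD : hdist p v = (Finset.univ.filter fun i => ∃ a, S i = some a ∧ v i ≠ a).card := by
    unfold hdist
    congr 1
    refine Finset.filter_congr fun i _ => ?_
    cases hS : S i with
    | none => simp [hpdef, hS]
    | some a =>
      simp only [hpdef, hS, Option.getD_some]
      constructor
      · intro h; exact ⟨a, rfl, fun hh => h hh.symm⟩
      · rintro ⟨b, hb, hvb⟩
        obtain rfl : a = b := by injection hb
        exact fun hh => hvb hh.symm
  unfold setDist
  have hmem : (Finset.univ.filter fun i => ∃ a, S i = some a ∧ v i ≠ a).card ∈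
      {d | ∃ u ∈ projSet S, ∃ w ∈ ({v} : Set (Fin n → Fin k)), (hamming n k).dist u w = d} :=
    ⟨p, hp, v, rfl, by rw [hamming_dist_eq]; exact hD⟩
  apply le_antisymm (Nat.sInf_le hmem)
  obtain ⟨u, hu, w, hw, hd⟩ := Nat.sInf_mem (Set.nonempty_of_mem hmem)
  obtain rfl : w = v := hw
  rw [← hd, hamming_dist_eq]
  unfold hdist
  apply Finset.card_le_card
  intro i hi
  simp only [Finset.mem_filter, Finset.mem_univ, true_and] at hi ⊢
  obtain ⟨a, hSa, hva⟩ := hi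
  rw [hu i a hSa]
  exact fun h => hva h.symm

lemma lemmaL (S : Fin n → Option (Fin k)) (i : Fin n) (a : Fin k) (hS : S i = some a)
    (x : Fin n → Fin k) (hx : ∀ j b, S j = some b → j ≠ i → x j = b)
    (X : Set (Fin n → Fin k)) (hPX : projSet S ⊆ X)
    (hline : ∀ c : Fin k, Function.update x i c ∈ X) :
    projSet (fun j => if j = i then none else S j) ⊆ bootClosure (hamming n k) X := by
  classical
  suffices H : ∀ d (w : Fin n → Fin k), w ∈ projSet (fun j => if j = i then none else S j) →
      (Finset.univ.filter fun j => S j = none ∧ w j ≠ x j).card = d →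
      w ∈ bootClosure (hamming n k) X by
    intro w hw; exact H _ w hw rfl
  intro d
  induction d with
  | zero =>
    intro w hw hcard
    have hwx : w = Function.update x i (w i) := by
      funext j
      rcases eq_or_ne j i with rfl | hj
      · simp
      · rw [Function.update_apply, if_neg hj]
        cases hSj : S j with
        | none =>
          by_contra hne2
          have hjmem : j ∈ Finset.univ.filter (fun j => S j = none ∧ w j ≠ x j) := by
            simp [hSj, hne2]
          rw [Finset.card_eq_zero.mp hcard] at hjmem
          simp at hjmem
        | some b =>
          rw [hw j b (by simp [hj, hSj]), hx j b hSj hj]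
    rw [hwx]
    exact subset_bootClosure _ (hline _)
  | succ d ih =>
    intro w hw hcard
    have hne : (Finset.univ.filter fun j => S j = none ∧ w j ≠ x j).Nonempty := by
      rw [← Finset.card_pos, hcard]; omega
    obtain ⟨j, hj⟩ := hne
    obtain ⟨hSj, hwj⟩ := (Finset.mem_filter.mp hj).2
    have hji : j ≠ i := fun h => by rw [h, hS] at hSj; cases hSj
    by_cases hwi : w i = a
    · refine subset_bootClosure _ (hPX ?_)
      intro j' b hb
      rcases eq_or_ne j' i with rfl | h'
      · rw [hS] at hb
        obtain rfl : a = b := by injection hb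
        exact hwi
      · exact hw j' b (by simp [h', hb])
    · have hw1 : Function.update w j (x j) ∈ bootClosure (hamming n k) X := by
        apply ih
        · intro j' b hb
          simp only at hb
          split at hb
          · cases hb
          · rename_i h'
            have hjj : j' ≠ j := fun h => by rw [h, hSj] at hb; cases hb
            rw [Function.update_apply, if_neg hjj]
            exact hw j' b (by simp [h', hb])
        · have e : (Finset.univ.filter fun j' => S j' = none ∧
              Function.update w j (x j) j' ≠ x j')
              = (Finset.univ.filter fun j' => S j' = none ∧ w j' ≠ x j').erase j := by
            ext j'
            rcases eq_or_ne j' j with rfl | h'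
            · simp
            · simp [Function.update_apply, h']
          rw [e, Finset.card_erase_of_mem hj, hcard]
          omega
      have hw2 : Function.update w i a ∈ bootClosure (hamming n k) X := by
        refine subset_bootClosure _ (hPX ?_)
        intro j' b hb
        rcases eq_or_ne j' i with rfl | h'
        · rw [hS] at hb
          obtain rfl : a = b := by injection hb
          simp
        · rw [Function.update_apply, if_neg h']
          exact hw j' b (by simp [h', hb])
      apply bootStep_bootClosure
      refine Or.inr ⟨Function.update w j (x j), Function.update w i a, ?_,
        adj_update hwj.symm, adj_update (Ne.symm hwi), hw1, hw2⟩
      intro h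
      have := congrFun h j
      rw [Function.update_self, Function.update_of_ne hji] at this
      exact hwj this.symm

end ProjHelpers

section StepLemma

variable {n k : ℕ}

lemma step_lemma (S : Fin n → Option (Fin k)) (v : Fin n → Fin k)
    (i1 i2 : Fin n) (a1 a2 : Fin k) (h12 : i1 ≠ i2)
    (hS1 : S i1 = some a1) (hS2 : S i2 = some a2)
    (hv1 : v i1 ≠ a1) (hv2 : v i2 ≠ a2)
    (hrest : ∀ j b, S j = some b → j ≠ i1 → j ≠ i2 → v j = b) :
    bootClosure (hamming n k) (projSet S ∪ {v}) =
      projSet (fun j => if j = i1 ∨ j = i2 then none else S j) := by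
  classical
  set C := bootClosure (hamming n k) (projSet S ∪ {v}) with hC
  set u'' := Function.update v i1 a1 with hu''def
  set u' := Function.update u'' i2 a2 with hu'def
  have hu''1 : u'' i1 = a1 := by simp [hu''def]
  have hu''2 : u'' i2 = v i2 := by simp [hu''def, Function.update_of_ne (Ne.symm h12)]
  have hu'mem : u' ∈ projSet S := by
    intro j b hb
    rcases eq_or_ne j i2 with rfl | hj2
    · obtain rfl : a2 = b := by rw [hS2] at hb; injection hb
      simp [hu'def]
    · rw [hu'def, Function.update_of_ne hj2]
      rcases eq_or_ne j i1 with rfl | hj1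
      · obtain rfl : a1 = b := by rw [hS1] at hb; injection hb
        exact hu''1
      · rw [hu''def, Function.update_of_ne hj1]
        exact hrest j b hb hj1 hj2
  have hPC : projSet S ⊆ C := Set.subset_union_left.trans (subset_bootClosure _)
  have hvC : v ∈ C := subset_bootClosure _ (Or.inr rfl)
  have hu'C : u' ∈ C := hPC hu'mem
  have hadj_vu'' : (hamming n k).Adj v u'' := adj_update hv1.symm
  have hadj_u''u' : (hamming n k).Adj u'' u' := by
    rw [hu'def]
    exact adj_update (by rw [hu''2]; exact hv2.symm)
  have hvu' : v ≠ u' := by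
    intro h
    apply hv1
    have := congrFun h i1
    rw [hu'def, Function.update_of_ne h12, hu''1] at this
    exact this
  have hu''C : u'' ∈ C := by
    apply bootStep_bootClosure
    exact Or.inr ⟨v, u', hvu', hadj_vu''.symm, hadj_u''u', hvC, hu'C⟩
  have hvu'' : v ≠ u'' := fun h => hv1 (by rw [h]; exact hu''1)
  have hline1 : ∀ c : Fin k, Function.update v i1 c ∈ C := by
    intro c
    rcases eq_or_ne c (v i1) with rfl | hc1
    · rw [Function.update_eq_self]; exact hvC
    rcases eq_or_ne c a1 with rfl | hc2
    · exact hu''C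
    apply bootStep_bootClosure
    refine Or.inr ⟨v, u'', hvu'', (adj_update hc1).symm, ?_, hvC, hu''C⟩
    exact adj_update_update hc2.symm
  have hline2 : ∀ c : Fin k, Function.update u'' i2 c ∈ C := by
    intro c
    rcases eq_or_ne c (v i2) with rfl | hc1
    · rw [← hu''2, Function.update_eq_self]; exact hu''C
    rcases eq_or_ne c a2 with rfl | hc2
    · exact hu'C
    apply bootStep_bootClosure
    have hu''u' : u'' ≠ u' := by
      intro h
      apply hv2
      have := congrFun h i2
      rw [hu''2, hu'def, Function.update_self] at this
      exact this
    refine Or.inr ⟨u'', u', hu''u', ?_, ?_, hu''C, hu'C⟩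
    · exact (adj_update (by rw [hu''2]; exact hc1)).symm
    · rw [hu'def]; exact adj_update_update hc2.symm
  -- Stage B : free coordinate i2
  set S2 : Fin n → Option (Fin k) := fun j => if j = i2 then none else S j with hS2def
  have hstageB : projSet S2 ⊆ C := by
    have := lemmaL S i2 a2 hS2 u''
      (fun j b hb hj2 => by
        rcases eq_or_ne j i1 with rfl | hj1
        · obtain rfl : a1 = b := by rw [hS1] at hb; injection hb
          exact hu''1
        · rw [hu''def, Function.update_of_ne hj1]; exact hrest j b hb hj1 hj2)
      C hPC hline2
    rwa [hC, bootClosure_idem] at this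
  -- Stage C : free coordinate i1
  have hstageC : projSet (fun j => if j = i1 then none else S2 j) ⊆ C := by
    have := lemmaL S2 i1 a1 (by simp [hS2def, h12, hS1]) v
      (fun j b hb hj1 => by
        simp only [hS2def] at hb
        split at hb
        · cases hb
        · rename_i hj2; exact hrest j b hb hj1 hj2)
      C hstageB hline1
    rwa [hC, bootClosure_idem] at this
  have hSeq : (fun j => if j = i1 then none else S2 j)
      = (fun j => if j = i1 ∨ j = i2 then none else S j) := by
    funext j
    by_cases hj1 : j = i1 <;> by_cases hj2 : j = i2 <;> simp [hS2def, hj1, hj2]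
  rw [hSeq] at hstageC
  apply le_antisymm
  · refine bootClosure_subset_of_closed ?_ (projSet_closed _)
    apply Set.union_subset
    · intro w hw j b hb
      by_cases h : j = i1 ∨ j = i2
      · simp [h] at hb
      · simp only [if_neg h] at hb
        exact hw j b hb
    · rintro w rfl
      intro j b hb
      by_cases h : j = i1 ∨ j = i2
      · simp [h] at hb
      · simp only [if_neg h] at hb
        push_neg at h
        exact hrest j b hb h.1 h.2
  · exact hstageC

lemma projDim_free2 (S : Fin n → Option (Fin k)) (i1 i2 : Fin n) (a1 a2 : Fin k)
    (h12 : i1 ≠ i2) (hS1 : S i1 = some a1) (hS2 : S i2 = some a2) :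
    projDim (fun j => if j = i1 ∨ j = i2 then none else S j) = projDim S + 2 := by
  classical
  unfold projDim
  have e : (Finset.univ.filter fun j => (if j = i1 ∨ j = i2 then none else S j) = none)
      = insert i1 (insert i2 (Finset.univ.filter fun j => S j = none)) := by
    ext j
    by_cases hj1 : j = i1 <;> by_cases hj2 : j = i2 <;>
      simp [hj1, hj2]
  rw [e]
  have h2 : i2 ∉ (Finset.univ.filter fun j => S j = none) := by simp [hS2]
  have h1 : i1 ∉ insert i2 (Finset.univ.filter fun j => S j = none) := by
    simp [h12, hS1]
  rw [Finset.card_insert_of_notMem h1, Finset.card_insert_of_notMem h2]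

lemma projSet_const (v : Fin n → Fin k) : projSet (fun i => some (v i)) = {v} := by
  ext w
  constructor
  · intro h
    funext i
    exact h i (v i) rfl
  · rintro rfl i a h
    exact Option.some_inj.mp h

lemma projDim_const (v : Fin n → Fin k) : projDim (fun i => some (v i)) = 0 := by
  unfold projDim
  simp

end StepLemma

theorem stmt5 (n k : ℕ) (hk : 2 ≤ k) (U : Set (Fin n → Fin k))
    (hU : SeqSpanSet (hamming n k) U) :
    ∃ S : Fin n → Option (Fin k),
      projDim S = 2 * (U.ncard - 1) ∧ bootClosure (hamming n k) U = projSet S := by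
  classical
  obtain ⟨m, v, hinj, hrange, hspan⟩ := hU
  have hcard : U.ncard = m + 1 := by
    rw [← hrange, ← Nat.card_coe_set_eq, Nat.card_range_of_injective hinj,
      Nat.card_eq_fintype_card, Fintype.card_fin]
  have key : ∀ t, t ≤ m → ∃ S : Fin n → Option (Fin k),
      projDim S = 2 * t ∧
      bootClosure (hamming n k) (v '' {j | (j : ℕ) < t + 1}) = projSet S := by
    intro t
    induction t with
    | zero =>
      intro _
      refine ⟨fun i => some (v 0 i), projDim_const _, ?_⟩
      have himg : v '' {j : Fin (m + 1) | (j : ℕ) < 1} = {v 0} := by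
        have : {j : Fin (m + 1) | (j : ℕ) < 1} = {0} := by
          ext j
          simp only [Set.mem_setOf_eq, Set.mem_singleton_iff, Fin.ext_iff, Fin.val_zero,
            Nat.lt_one_iff]
        rw [this, Set.image_singleton]
      rw [himg, bootClosure_singleton, projSet_const]
    | succ t ih =>
      intro ht
      obtain ⟨S, hdim, hclos⟩ := ih (Nat.le_of_succ_le ht)
      set iv : Fin (m + 1) := ⟨t + 1, by omega⟩ with hivdef
      have hsd : setDist (hamming n k) (projSet S) {v iv} = 2 := by
        have h0 := hspan iv (by simp [hivdef])
        have hiveq : {j : Fin (m + 1) | (j : ℕ) < (iv : ℕ)}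
            = {j : Fin (m + 1) | (j : ℕ) < t + 1} := rfl
        rw [hiveq, hclos] at h0
        exact h0
      rw [setDist_projSet_eq] at hsd
      obtain ⟨i1, i2, h12, hD⟩ := Finset.card_eq_two.mp hsd
      have hmem1 : i1 ∈ Finset.univ.filter fun i => ∃ a, S i = some a ∧ v iv i ≠ a := by
        rw [hD]; simp
      have hmem2 : i2 ∈ Finset.univ.filter fun i => ∃ a, S i = some a ∧ v iv i ≠ a := by
        rw [hD]; simp
      obtain ⟨a1, hS1, hv1⟩ := (Finset.mem_filter.mp hmem1).2
      obtain ⟨a2, hS2, hv2⟩ := (Finset.mem_filter.mp hmem2).2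
      have hrest : ∀ j b, S j = some b → j ≠ i1 → j ≠ i2 → v iv j = b := by
        intro j b hb h1 h2
        by_contra hne
        have hjD : j ∈ Finset.univ.filter fun i => ∃ a, S i = some a ∧ v iv i ≠ a := by
          simp only [Finset.mem_filter, Finset.mem_univ, true_and]
          exact ⟨b, hb, hne⟩
        rw [hD] at hjD
        rcases Finset.mem_insert.mp hjD with h | h
        · exact h1 h
        · exact h2 (Finset.mem_singleton.mp h)
      refine ⟨fun j => if j = i1 ∨ j = i2 then none else S j,
        by rw [projDim_free2 S i1 i2 a1 a2 h12 hS1 hS2, hdim]; ring, ?_⟩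
      have himg : v '' {j : Fin (m + 1) | (j : ℕ) < t + 1 + 1}
          = v '' {j : Fin (m + 1) | (j : ℕ) < t + 1} ∪ {v iv} := by
        have e : {j : Fin (m + 1) | (j : ℕ) < t + 1 + 1}
            = {j : Fin (m + 1) | (j : ℕ) < t + 1} ∪ {iv} := by
          ext j
          simp only [Set.mem_setOf_eq, Set.mem_union, Set.mem_singleton_iff, Fin.ext_iff,
            hivdef]
          omega
        rw [e, Set.image_union, Set.image_singleton]
      rw [himg, ← bootClosure_union_closure, hclos]
      exact step_lemma S (v iv) i1 i2 a1 a2 h12 hS1 hS2 hv1 hv2 hrest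
  obtain ⟨S, hdim, hclos⟩ := key m le_rfl
  refine ⟨S, ?_, ?_⟩
  · rw [hcard]
    simpa using hdim
  · rw [← hclos]
    congr 1
    rw [← hrange]
    have e : {j : Fin (m + 1) | (j : ℕ) < m + 1} = Set.univ := by
      ext j; simp [j.isLt]; exact Nat.lt_succ_iff.mp j.isLt
    rw [e, Set.image_univ]
end

section
/- Let G = □_{i=1}^n K_k be the n-dimensional Hamming graph, A ⊆ V(G), and let H be a projection of G internally spanned by A. Then for every 1 ≤ t ≤ dim(H) there exist indices (ℓ,i,j,d) ∈ ℕ_0^4 with ℓ ≥ t, j ≤ i < t and d ∈ {0,1,2}, and projections H_i, H_j, H_ℓ of G of respective dimensions i, j, ℓ, such that: (1) dist(H_i, H_j) = d; (2) [V(H_i) ∪ V(H_j)] = V(H_ℓ); and (3) H_i and H_j are disjointly internally spanned by A. -/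
open scoped Classical

namespace BP

variable {V : Type*} {G : SimpleGraph V} {A B : Set V}

/-- closedness under the bootstrap rule -/
def IsBC (G : SimpleGraph V) (U : Set V) : Prop :=
  ∀ v u w, u ≠ w → G.Adj v u → G.Adj v w → u ∈ U → w ∈ U → v ∈ U

lemma subset_bootIter (G : SimpleGraph V) (A : Set V) : ∀ j, bootIter G A j ⊆ bootIter G A (j+1) := by
  intro j
  exact Set.subset_union_left

lemma bootIter_mono (G : SimpleGraph V) (A : Set V) {j j' : ℕ} (h : j ≤ j') :
    bootIter G A j ⊆ bootIter G A j' := by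
  induction j' with
  | zero => simp_all
  | succ j' ih =>
    rcases Nat.lt_or_ge j (j'+1) with h' | h'
    · exact (ih (Nat.lt_succ_iff.1 h')).trans (subset_bootIter G A j')
    · have : j = j' + 1 := le_antisymm h h'
      subst this; rfl

lemma subset_bootClosure (G : SimpleGraph V) (A : Set V) : A ⊆ bootClosure G A :=
  Set.subset_iUnion (bootIter G A) 0

lemma bootClosure_subset {U : Set V} (hU : IsBC G U) (hA : A ⊆ U) : bootClosure G A ⊆ U := by
  have : ∀ j, bootIter G A j ⊆ U := by
    intro j
    induction j with
    | zero => exact hA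
    | succ j ih =>
      rintro v (hv | ⟨u, w, hne, a1, a2, hu, hw⟩)
      · exact ih hv
      · exact hU v u w hne a1 a2 (ih hu) (ih hw)
  exact Set.iUnion_subset this

lemma isBC_bootClosure (G : SimpleGraph V) (A : Set V) : IsBC G (bootClosure G A) := by
  intro v u w hne a1 a2 hu hw
  obtain ⟨j1, hj1⟩ := Set.mem_iUnion.1 hu
  obtain ⟨j2, hj2⟩ := Set.mem_iUnion.1 hw
  refine Set.mem_iUnion.2 ⟨max j1 j2 + 1, Or.inr ⟨u, w, hne, a1, a2, ?_, ?_⟩⟩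
  · exact bootIter_mono G A (le_max_left _ _) hj1
  · exact bootIter_mono G A (le_max_right _ _) hj2

lemma bootClosure_mono (h : A ⊆ B) : bootClosure G A ⊆ bootClosure G B :=
  bootClosure_subset (isBC_bootClosure G B) (h.trans (subset_bootClosure G B))

lemma mem_bootClosure_of_subset {v : V} (h : A ⊆ B) (hv : v ∈ bootClosure G A) :
    v ∈ bootClosure G B := bootClosure_mono h hv

lemma bootClosure_empty (G : SimpleGraph V) : bootClosure G (∅ : Set V) = ∅ := by
  refine subset_antisymm (bootClosure_subset ?_ subset_rfl) (subset_bootClosure G _)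
  rintro v u w hne a1 a2 hu hw
  exact hu.elim

lemma bootClosure_singleton (G : SimpleGraph V) (a : V) : bootClosure G ({a} : Set V) = {a} := by
  refine subset_antisymm (bootClosure_subset ?_ subset_rfl) (subset_bootClosure G _)
  rintro v u w hne a1 a2 hu hw
  rw [Set.mem_singleton_iff] at hu hw
  exact absurd (hu.trans hw.symm) hne

lemma bootClosure_union_closure (G : SimpleGraph V) (A B : Set V) :
    bootClosure G (A ∪ B) = bootClosure G (bootClosure G A ∪ bootClosure G B) := by
  refine subset_antisymm (bootClosure_mono (Set.union_subset_union
      (subset_bootClosure G A) (subset_bootClosure G B))) ?_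
  refine bootClosure_subset (isBC_bootClosure _ _) (Set.union_subset ?_ ?_)
  · exact bootClosure_mono Set.subset_union_left
  · exact bootClosure_mono Set.subset_union_right

variable {n k : ℕ}

/-- Hamming distance -/
def hdst (u v : Fin n → Fin k) : ℕ := (Finset.univ.filter fun i => u i ≠ v i).card

lemma hamming_adj {u v : Fin n → Fin k} : (hamming n k).Adj u v ↔ hdst u v = 1 := Iff.rfl

lemma hdst_comm (u v : Fin n → Fin k) : hdst u v = hdst v u := by
  unfold hdst
  congr 1
  exact Finset.filter_congr fun i _ => ne_comm

lemma hdst_eq_zero {u v : Fin n → Fin k} : hdst u v = 0 ↔ u = v := by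
  unfold hdst
  rw [Finset.card_eq_zero, Finset.filter_eq_empty_iff]
  constructor
  · intro h; funext i; have := h (Finset.mem_univ i); simpa using this
  · intro h i _; simp [h]

lemma adj_of_eq {u v : Fin n → Fin k} (i : Fin n) (h1 : u i ≠ v i)
    (h2 : ∀ j, j ≠ i → u j = v j) : (hamming n k).Adj u v := by
  show (Finset.univ.filter fun j => u j ≠ v j).card = 1
  have he : (Finset.univ.filter fun j => u j ≠ v j) = {i} := by
    ext j
    simp only [Finset.mem_filter, Finset.mem_univ, true_and, Finset.mem_singleton]
    constructor
    · intro hj; by_contra hji; exact hj (h2 j hji)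
    · rintro rfl; exact h1
  rw [he, Finset.card_singleton]

lemma eq_of_adj {u v : Fin n → Fin k} (h : (hamming n k).Adj u v) (i : Fin n)
    (hi : u i ≠ v i) : ∀ j, j ≠ i → u j = v j := by
  have hc : (Finset.univ.filter fun j => u j ≠ v j).card = 1 := h
  obtain ⟨x, hx⟩ := Finset.card_eq_one.1 hc
  have hix : i ∈ ({x} : Finset (Fin n)) := by
    rw [← hx]; simp [hi]
  have hxi : x = i := (Finset.mem_singleton.1 hix).symm
  intro j hj
  by_contra hne
  have : j ∈ ({x} : Finset (Fin n)) := by rw [← hx]; simp [hne]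
  exact hj ((Finset.mem_singleton.1 this).trans hxi)

lemma hdst_triangle (u v w : Fin n → Fin k) : hdst u w ≤ hdst u v + hdst v w := by
  refine le_trans (Finset.card_le_card ?_) (Finset.card_union_le _ _)
  intro i hi
  simp only [Finset.mem_filter, Finset.mem_univ, true_and, Finset.mem_union] at hi ⊢
  by_contra hc
  push_neg at hc
  exact hi (hc.1.trans hc.2)

lemma hdst_update_erase {u v : Fin n → Fin k} {i : Fin n} (hi : u i ≠ v i) :
    (Finset.univ.filter fun j => Function.update u i (v i) j ≠ v j)
      = (Finset.univ.filter fun j => u j ≠ v j).erase i := by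
  ext j
  by_cases hj : j = i
  · subst hj; simp [Function.update_self]
  · simp [Function.update_of_ne hj, hj]

lemma exists_walk_hdst : ∀ (m : ℕ) (u v : Fin n → Fin k), hdst u v = m →
    ∃ p : (hamming n k).Walk u v, p.length = m := by
  intro m
  induction m with
  | zero =>
    intro u v h
    obtain rfl := hdst_eq_zero.1 h
    exact ⟨SimpleGraph.Walk.nil, rfl⟩
  | succ m ih =>
    intro u v h
    have hne : (Finset.univ.filter fun i => u i ≠ v i).Nonempty := by
      rw [← Finset.card_pos]; unfold hdst at h; omega
    obtain ⟨i, hi⟩ := hne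
    have hiuv : u i ≠ v i := by simpa using hi
    have hadj : (hamming n k).Adj u (Function.update u i (v i)) := by
      refine adj_of_eq i ?_ ?_
      · rw [Function.update_self]; exact hiuv
      · intro j hj; rw [Function.update_of_ne hj]
    have h' : hdst (Function.update u i (v i)) v = m := by
      unfold hdst
      rw [hdst_update_erase hiuv, Finset.card_erase_of_mem hi]
      unfold hdst at h; omega
    obtain ⟨p, hp⟩ := ih _ v h'
    exact ⟨SimpleGraph.Walk.cons hadj p, by simp [hp]⟩

lemma hdst_le_length {u v : Fin n → Fin k} (p : (hamming n k).Walk u v) :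
    hdst u v ≤ p.length := by
  induction p with
  | nil => simp [hdst_eq_zero.2 rfl]
  | @cons a b c h p ih =>
    have h1 : hdst a b = 1 := h
    calc hdst a c ≤ hdst a b + hdst b c := hdst_triangle a b c
    _ ≤ 1 + p.length := by rw [h1]; omega
    _ = (SimpleGraph.Walk.cons h p).length := by simp [SimpleGraph.Walk.length_cons]; omega

lemma hamming_dist_eq (u v : Fin n → Fin k) : (hamming n k).dist u v = hdst u v := by
  obtain ⟨p, hp⟩ := exists_walk_hdst (hdst u v) u v rfl
  refine le_antisymm (hp ▸ SimpleGraph.dist_le p) ?_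
  obtain ⟨q, hq⟩ := SimpleGraph.Reachable.exists_walk_length_eq_dist ⟨p⟩
  exact hq ▸ hdst_le_length q

lemma setDist_le {X Y : Set (Fin n → Fin k)} {u v : Fin n → Fin k}
    (hu : u ∈ X) (hv : v ∈ Y) : setDist (hamming n k) X Y ≤ hdst u v := by
  have : hdst u v ∈ {d | ∃ u ∈ X, ∃ v ∈ Y, (hamming n k).dist u v = d} :=
    ⟨u, hu, v, hv, hamming_dist_eq u v⟩
  exact Nat.sInf_le this

lemma setDist_comm {V : Type*} (G : SimpleGraph V) (X Y : Set V) :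
    setDist G X Y = setDist G Y X := by
  unfold setDist
  congr 1
  ext d
  constructor
  · rintro ⟨u, hu, v, hv, h⟩; exact ⟨v, hv, u, hu, (SimpleGraph.dist_comm).trans h⟩
  · rintro ⟨u, hu, v, hv, h⟩; exact ⟨v, hv, u, hu, (SimpleGraph.dist_comm).trans h⟩

-- ============ projection lemmas ============
variable {n k : ℕ}

lemma isBC_projSet (S : Fin n → Option (Fin k)) : IsBC (hamming n k) (projSet S) := by
  intro v u w huw hvu hvw hu hw
  intro i a hSi
  by_contra hvi
  have hui : v i ≠ u i := by rw [hu i a hSi]; exact hvi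
  have hwi : v i ≠ w i := by rw [hw i a hSi]; exact hvi
  have h1 := eq_of_adj hvu i hui
  have h2 := eq_of_adj hvw i hwi
  apply huw
  funext j
  by_cases hj : j = i
  · subst hj; rw [hu j a hSi, hw j a hSi]
  · rw [← h1 j hj, ← h2 j hj]

lemma projSet_subset_of {S S' : Fin n → Option (Fin k)}
    (h : ∀ i a, S' i = some a → S i = some a) : projSet S ⊆ projSet S' := by
  intro v hv i a hS'
  exact hv i a (h i a hS')

lemma mem_projSet_update {S : Fin n → Option (Fin k)} {v : Fin n → Fin k} {i : Fin n}
    (hv : v ∈ projSet S) (hi : S i = none) (c : Fin k) :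
    Function.update v i c ∈ projSet S := by
  intro j a hj
  have hji : j ≠ i := by rintro rfl; rw [hi] at hj; exact nomatch hj
  rw [Function.update_of_ne hji]
  exact hv j a hj

lemma projSet_singProj (a : Fin n → Fin k) :
    projSet (fun i => some (a i)) = {a} := by
  ext v
  constructor
  · intro hv; funext i; exact hv i (a i) rfl
  · rintro rfl i b hb; exact Option.some_inj.1 hb

lemma projDim_singProj (a : Fin n → Fin k) : projDim (fun i => some (a i)) = 0 := by
  unfold projDim
  rw [Finset.card_eq_zero, Finset.filter_eq_empty_iff]
  intro i _
  simp

/-- base point of a projection (with tie-breaking by a second projection) -/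
def fillPt (z : Fin k) (S S' : Fin n → Option (Fin k)) : Fin n → Fin k :=
  fun i => ((S i).or (S' i)).getD z

lemma fillPt_mem (z : Fin k) (S S' : Fin n → Option (Fin k)) :
    fillPt z S S' ∈ projSet S := by
  intro i a h
  simp [fillPt, h]

/-- the set of coordinates where two projections conflict -/
def Dset (S S' : Fin n → Option (Fin k)) : Finset (Fin n) :=
  Finset.univ.filter fun i => S i ≠ S' i ∧ S i ≠ none ∧ S' i ≠ none

lemma mem_Dset {S S' : Fin n → Option (Fin k)} {i : Fin n} :
    i ∈ Dset S S' ↔ S i ≠ S' i ∧ S i ≠ none ∧ S' i ≠ none := by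
  simp [Dset]

lemma fillPt_agree {z : Fin k} {S S' : Fin n → Option (Fin k)} {i : Fin n}
    (h : i ∉ Dset S S') : fillPt z S S' i = fillPt z S' S i := by
  rw [mem_Dset] at h
  push_neg at h
  rcases hS : S i with _ | a <;> rcases hS' : S' i with _ | a' <;>
    simp [fillPt, hS, hS']
  by_contra haa
  have h1 : S i ≠ S' i := by rw [hS, hS']; simpa using haa
  have h2 : S i ≠ none := by rw [hS]; simp
  have h3 := h h1 h2
  rw [hS'] at h3
  exact nomatch h3

lemma fillPt_ne {z : Fin k} {S S' : Fin n → Option (Fin k)} {i : Fin n}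
    (h : i ∈ Dset S S') : fillPt z S S' i ≠ fillPt z S' S i := by
  rw [mem_Dset] at h
  obtain ⟨hne, hS, hS'⟩ := h
  obtain ⟨a, ha⟩ := Option.ne_none_iff_exists'.1 hS
  obtain ⟨a', ha'⟩ := Option.ne_none_iff_exists'.1 hS'
  simp only [fillPt, ha, ha']
  intro hcon
  apply hne
  rw [ha, ha']
  simp at hcon
  rw [hcon]

lemma setDist_proj (hk : 0 < k) (S S' : Fin n → Option (Fin k)) :
    setDist (hamming n k) (projSet S) (projSet S') = (Dset S S').card := by
  set z : Fin k := ⟨0, hk⟩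
  have hb : fillPt z S S' ∈ projSet S := fillPt_mem z S S'
  have hb' : fillPt z S' S ∈ projSet S' := fillPt_mem z S' S
  have hdd : hdst (fillPt z S S') (fillPt z S' S) = (Dset S S').card := by
    unfold hdst
    congr 1
    ext i
    simp only [Finset.mem_filter, Finset.mem_univ, true_and]
    constructor
    · intro h; by_contra hD; exact h (fillPt_agree hD)
    · exact fillPt_ne
  refine le_antisymm (hdd ▸ setDist_le hb hb') ?_
  have hne : {d | ∃ u ∈ projSet S, ∃ v ∈ projSet S', (hamming n k).dist u v = d}.Nonempty :=
    ⟨_, ⟨_, hb, _, hb', rfl⟩⟩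
  obtain ⟨u, hu, v, hv, hduv⟩ := Nat.sInf_mem hne
  show (Dset S S').card ≤ sInf _
  rw [show sInf {d | ∃ u ∈ projSet S, ∃ v ∈ projSet S', (hamming n k).dist u v = d}
      = (hamming n k).dist u v from hduv ▸ rfl, hamming_dist_eq]
  refine Finset.card_le_card ?_
  intro i hi
  rw [mem_Dset] at hi
  obtain ⟨hne', hS, hS'⟩ := hi
  obtain ⟨a, ha⟩ := Option.ne_none_iff_exists'.1 hS
  obtain ⟨a', ha'⟩ := Option.ne_none_iff_exists'.1 hS'
  simp only [Finset.mem_filter, Finset.mem_univ, true_and]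
  rw [hu i a ha, hv i a' ha']
  intro hcon
  exact hne' (by rw [ha, ha', hcon])

lemma projDim_le_of_subset (hk : 2 ≤ k) {S S' : Fin n → Option (Fin k)}
    (h : projSet S ⊆ projSet S') : projDim S ≤ projDim S' := by
  refine Finset.card_le_card ?_
  intro i hi
  simp only [Finset.mem_filter, Finset.mem_univ, true_and] at hi ⊢
  by_contra hS'
  obtain ⟨a, ha⟩ := Option.ne_none_iff_exists'.1 hS'
  have hz : 0 < k := by omega
  have hcard : 1 < Fintype.card (Fin k) := by simpa using (show 1 < k by omega)
  obtain ⟨b, hb⟩ := Fintype.exists_ne_of_one_lt_card hcard a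
  have h1 : Function.update (fillPt ⟨0, hz⟩ S S) i a ∈ projSet S :=
    mem_projSet_update (fillPt_mem _ S S) hi a
  have h2 : Function.update (fillPt ⟨0, hz⟩ S S) i b ∈ projSet S :=
    mem_projSet_update (fillPt_mem _ S S) hi b
  have e1 := h h1 i a ha
  have e2 := h h2 i a ha
  rw [Function.update_self] at e1 e2
  exact hb e2

/-- The spreading lemma: if a closed set contains a base point and, for every coordinate in
`F`, some neighbour of the base point in direction that coordinate, then it contains the whole
projection through the base point with free coordinates `F`. -/
lemma spread (C : Set (Fin n → Fin k)) (hC : IsBC (hamming n k) C)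
    (b : Fin n → Fin k) (hb : b ∈ C) :
    ∀ F : Finset (Fin n), (∀ i ∈ F, ∃ c, c ≠ b i ∧ Function.update b i c ∈ C) →
    ∀ v : Fin n → Fin k, (∀ i, i ∉ F → v i = b i) → v ∈ C := by
  intro F
  induction F using Finset.cons_induction with
  | empty =>
    intro _ v hv
    have : v = b := funext fun i => hv i (by simp)
    rw [this]; exact hb
  | cons i F₀ hiF₀ ih =>
    intro hwit v hv
    have hwit₀ : ∀ i' ∈ F₀, ∃ c, c ≠ b i' ∧ Function.update b i' c ∈ C :=
      fun i' hi' => hwit i' (Finset.mem_cons.2 (Or.inr hi'))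
    have hP' : ∀ v₀ : Fin n → Fin k, (∀ j, j ∉ F₀ → v₀ j = b j) → v₀ ∈ C := ih hwit₀
    have inner : ∀ m : ℕ, ∀ v₀ : Fin n → Fin k, (∀ j, j ∉ F₀ → v₀ j = b j) →
        (Finset.univ.filter fun j => v₀ j ≠ b j).card ≤ m →
        ∀ c, Function.update v₀ i c ∈ C := by
      intro m
      induction m with
      | zero =>
        intro v₀ hsupp hcard c
        have hv₀b : v₀ = b := by
          funext j
          by_contra hj
          have : j ∈ Finset.univ.filter fun j => v₀ j ≠ b j := by simp [hj]
          have := Finset.card_pos.2 ⟨j, this⟩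
          omega
        subst hv₀b
        by_cases hcbi : c = v₀ i
        · rw [hcbi, Function.update_eq_self]; exact hb
        · obtain ⟨c₀, hc₀, hm⟩ := hwit i (Finset.mem_cons_self i F₀)
          by_cases hcc : c = c₀
          · rw [hcc]; exact hm
          · refine hC _ v₀ (Function.update v₀ i c₀) ?_ ?_ ?_ hb hm
            · intro he
              apply hc₀
              have := congrFun he i
              rw [Function.update_self] at this
              exact this.symm
            · refine adj_of_eq i ?_ ?_
              · rw [Function.update_self]; exact hcbi
              · intro j hj; rw [Function.update_of_ne hj]
            · refine adj_of_eq i ?_ ?_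
              · rw [Function.update_self, Function.update_self]; exact hcc
              · intro j hj; rw [Function.update_of_ne hj, Function.update_of_ne hj]
      | succ m ihm =>
        intro v₀ hsupp hcard c
        by_cases hle : (Finset.univ.filter fun j => v₀ j ≠ b j).card ≤ m
        · exact ihm v₀ hsupp hle c
        · have hpos : 0 < (Finset.univ.filter fun j => v₀ j ≠ b j).card := by omega
          obtain ⟨j, hj⟩ := Finset.card_pos.1 hpos
          have hjb : v₀ j ≠ b j := by simpa using hj
          have hjF₀ : j ∈ F₀ := by
            by_contra hjn
            exact hjb (hsupp j hjn)
          have hji : j ≠ i := fun h => hiF₀ (h ▸ hjF₀)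
          set v₁ := Function.update v₀ j (b j) with hv₁
          have hsupp₁ : ∀ j', j' ∉ F₀ → v₁ j' = b j' := by
            intro j' hj'
            by_cases hj'j : j' = j
            · subst hj'j; rw [hv₁, Function.update_self]
            · rw [hv₁, Function.update_of_ne hj'j]; exact hsupp j' hj'
          have hcard₁ : (Finset.univ.filter fun j' => v₁ j' ≠ b j').card ≤ m := by
            have he : (Finset.univ.filter fun j' => v₁ j' ≠ b j')
                = (Finset.univ.filter fun j' => v₀ j' ≠ b j').erase j := by
              ext j'
              by_cases hj'j : j' = j
              · subst hj'j; simp [hv₁, Function.update_self]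
              · simp [hv₁, Function.update_of_ne hj'j, hj'j]
            rw [he, Finset.card_erase_of_mem hj]
            omega
          have h1 : ∀ c', Function.update v₁ i c' ∈ C := ihm v₁ hsupp₁ hcard₁
          by_cases hcv : c = v₀ i
          · rw [hcv, Function.update_eq_self]; exact hP' v₀ hsupp
          · refine hC _ v₀ (Function.update v₁ i c) ?_ ?_ ?_ (hP' v₀ hsupp) (h1 c)
            · intro he
              apply hcv
              have := congrFun he i
              rw [Function.update_self] at this
              exact this.symm
            · refine adj_of_eq i ?_ ?_
              · rw [Function.update_self]; exact hcv
              · intro j' hj'; rw [Function.update_of_ne hj']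
            · refine adj_of_eq j ?_ ?_
              · rw [Function.update_of_ne hji, Function.update_of_ne hji, hv₁,
                  Function.update_self]
                exact hjb
              · intro j' hj'
                by_cases hj'i : j' = i
                · subst hj'i; rw [Function.update_self, Function.update_self]
                · rw [Function.update_of_ne hj'i, Function.update_of_ne hj'i, hv₁,
                    Function.update_of_ne hj']
    set v₀ := Function.update v i (b i) with hv₀
    have hsupp : ∀ j, j ∉ F₀ → v₀ j = b j := by
      intro j hj
      by_cases hji : j = i
      · subst hji; rw [hv₀, Function.update_self]
      · rw [hv₀, Function.update_of_ne hji]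
        exact hv j (by simp [Finset.mem_cons, hji, hj])
    have hcard : (Finset.univ.filter fun j => v₀ j ≠ b j).card ≤ F₀.card := by
      refine Finset.card_le_card ?_
      intro j hjm
      simp only [Finset.mem_filter, Finset.mem_univ, true_and] at hjm
      by_contra hjn
      exact hjm (hsupp j hjn)
    have := inner F₀.card v₀ hsupp hcard (v i)
    have hvv : Function.update v₀ i (v i) = v := by
      funext j
      by_cases hji : j = i
      · subst hji; rw [Function.update_self]
      · rw [Function.update_of_ne hji, hv₀, Function.update_of_ne hji]
    rwa [hvv] at this

/-- The merged projection: coordinates on which the two projections agree stay fixed,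
all others are freed. -/
def mergeProj (S S' : Fin n → Option (Fin k)) : Fin n → Option (Fin k) :=
  fun i => if S i = S' i then S i else none

lemma mergeProj_left {S S' : Fin n → Option (Fin k)} :
    ∀ i a, mergeProj S S' i = some a → S i = some a := by
  intro i a h
  unfold mergeProj at h
  split at h
  · exact h
  · exact nomatch h

lemma mergeProj_right {S S' : Fin n → Option (Fin k)} :
    ∀ i a, mergeProj S S' i = some a → S' i = some a := by
  intro i a h
  unfold mergeProj at h
  split at h
  · rename_i he; rw [← he]; exact h
  · exact nomatch h

lemma merge_closure (hk : 2 ≤ k) (S S' : Fin n → Option (Fin k))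
    (hD : (Dset S S').card ≤ 2) :
    bootClosure (hamming n k) (projSet S ∪ projSet S') = projSet (mergeProj S S') := by
  have hz : 0 < k := by omega
  set z : Fin k := ⟨0, hz⟩ with hzdef
  set b : Fin n → Fin k := fillPt z S S' with hbdef
  set b' : Fin n → Fin k := fillPt z S' S with hb'def
  set D : Finset (Fin n) := Dset S S' with hDdef
  set C : Set (Fin n → Fin k) := bootClosure (hamming n k) (projSet S ∪ projSet S') with hCdef
  have hC : IsBC (hamming n k) C := isBC_bootClosure _ _
  have hbC : b ∈ C := subset_bootClosure _ _ (Or.inl (fillPt_mem z S S'))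
  have hb'C : b' ∈ C := subset_bootClosure _ _ (Or.inr (fillPt_mem z S' S))
  set bE : Finset (Fin n) → (Fin n → Fin k) := fun E i => if i ∈ E then b' i else b i
    with hbEdef
  have bE_empty : bE ∅ = b := by funext i; simp [hbEdef]
  have bE_D : bE D = b' := by
    funext i
    by_cases hi : i ∈ D
    · simp [hbEdef, hi]
    · simp only [hbEdef]
      rw [if_neg hi]
      exact fillPt_agree hi
  have claim1 : ∀ E ⊆ D, bE E ∈ C := by
    intro E hE
    by_cases hE0 : E = ∅
    · rw [hE0, bE_empty]; exact hbC
    by_cases hED : E = D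
    · rw [hED, bE_D]; exact hb'C
    have hEne : E.Nonempty := Finset.nonempty_iff_ne_empty.2 hE0
    have hDEne : (D \ E).Nonempty := by
      rw [Finset.sdiff_nonempty]
      intro hDE
      exact hED (Finset.Subset.antisymm hE hDE)
    have hcards : (D \ E).card + E.card = D.card := Finset.card_sdiff_add_card_eq_card hE
    have hE1 : E.card = 1 := by
      have := Finset.one_le_card.2 hEne
      have := Finset.one_le_card.2 hDEne
      omega
    have hDE1 : (D \ E).card = 1 := by
      have := Finset.one_le_card.2 hEne
      have := Finset.one_le_card.2 hDEne
      omega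
    obtain ⟨i', hE'⟩ := Finset.card_eq_one.1 hE1
    obtain ⟨i'', hDE'⟩ := Finset.card_eq_one.1 hDE1
    have hi'E : i' ∈ E := hE' ▸ Finset.mem_singleton_self i'
    have hi'D : i' ∈ D := hE hi'E
    have hi''m : i'' ∈ D \ E := hDE' ▸ Finset.mem_singleton_self i''
    have hi''D : i'' ∈ D := (Finset.mem_sdiff.1 hi''m).1
    have hi''E : i'' ∉ E := (Finset.mem_sdiff.1 hi''m).2
    refine hC (bE E) b b' ?_ ?_ ?_ hbC hb'C
    · intro he
      exact fillPt_ne hi'D (congrFun he i')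
    · refine adj_of_eq i' ?_ ?_
      · have : bE E i' = b' i' := by simp [hbEdef, hi'E]
        rw [this]
        exact fun he => fillPt_ne hi'D he.symm
      · intro j hj
        have hjE : j ∉ E := by rw [hE']; simpa using hj
        simp [hbEdef, hjE]
    · refine adj_of_eq i'' ?_ ?_
      · have : bE E i'' = b i'' := by simp [hbEdef, hi''E]
        rw [this]
        exact fillPt_ne hi''D
      · intro j hj
        by_cases hjE : j ∈ E
        · simp [hbEdef, hjE]
        · have hjD : j ∉ D := by
            intro hjD
            have : j ∈ D \ E := Finset.mem_sdiff.2 ⟨hjD, hjE⟩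
            rw [hDE'] at this
            exact hj (Finset.mem_singleton.1 this)
          simp only [hbEdef, hjE, if_neg, ite_false]
          exact fillPt_agree hjD
  have claim2 : ∀ i : Fin n, S' i = none → ∀ c : Fin k, c ≠ b i →
      ∀ E ⊆ D, Function.update (bE E) i c ∈ C := by
    intro i hSi c hc
    have hiD : i ∉ D := by
      rw [hDdef, mem_Dset]
      push_neg
      intro _ _
      exact hSi
    have key : ∀ m : ℕ, ∀ E ⊆ D, (D \ E).card ≤ m → Function.update (bE E) i c ∈ C := by
      intro m
      induction m with
      | zero =>
        intro E hE hcard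
        have hDE : D ⊆ E := by
          rw [← Finset.sdiff_eq_empty_iff_subset]
          exact Finset.card_eq_zero.1 (Nat.le_zero.1 hcard)
        have hED : E = D := Finset.Subset.antisymm hE hDE
        rw [hED, bE_D]
        refine subset_bootClosure _ _ (Or.inr ?_)
        exact mem_projSet_update (fillPt_mem z S' S) hSi c
      | succ m ihm =>
        intro E hE hcard
        by_cases hle : (D \ E).card ≤ m
        · exact ihm E hE hle
        · have hpos : 0 < (D \ E).card := by omega
          obtain ⟨i₀, hi₀⟩ := Finset.card_pos.1 hpos
          have hi₀D : i₀ ∈ D := (Finset.mem_sdiff.1 hi₀).1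
          have hi₀E : i₀ ∉ E := (Finset.mem_sdiff.1 hi₀).2
          have hiE : i ∉ E := fun h => hiD (hE h)
          have hii₀ : i ≠ i₀ := fun h => hiD (h ▸ hi₀D)
          set E' := insert i₀ E with hE'def
          have hE'D : E' ⊆ D := Finset.insert_subset hi₀D hE
          have hcard' : (D \ E').card ≤ m := by
            rw [hE'def, Finset.sdiff_insert, Finset.card_erase_of_mem hi₀]
            omega
          have hw' := ihm E' hE'D hcard'
          refine hC _ (bE E) (Function.update (bE E') i c) ?_ ?_ ?_ (claim1 E hE) hw'
          · intro he
            apply hc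
            have := congrFun he i
            rw [Function.update_self] at this
            rw [← this]
            simp [hbEdef, hiE]
          · refine adj_of_eq i ?_ ?_
            · rw [Function.update_self]
              have : bE E i = b i := by simp [hbEdef, hiE]
              rw [this]; exact hc
            · intro j hj; rw [Function.update_of_ne hj]
          · refine adj_of_eq i₀ ?_ ?_
            · rw [Function.update_of_ne hii₀.symm, Function.update_of_ne hii₀.symm]
              have h1 : bE E i₀ = b i₀ := by simp [hbEdef, hi₀E]
              have h2 : bE E' i₀ = b' i₀ := by simp [hbEdef, hE'def]
              rw [h1, h2]
              exact fillPt_ne hi₀D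
            · intro j hj
              by_cases hji : j = i
              · subst hji; rw [Function.update_self, Function.update_self]
              · rw [Function.update_of_ne hji, Function.update_of_ne hji]
                by_cases hjE : j ∈ E
                · have hjE' : j ∈ E' := by rw [hE'def]; exact Finset.mem_insert_of_mem hjE
                  simp [hbEdef, hjE, hjE']
                · have hjE' : j ∉ E' := by
                    rw [hE'def, Finset.mem_insert]
                    push_neg
                    exact ⟨hj, hjE⟩
                  simp [hbEdef, hjE, hjE']
    exact fun E hE => key ((D \ E).card) E hE le_rfl
  set F : Finset (Fin n) := Finset.univ.filter fun i => mergeProj S S' i = none with hFdef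
  have hwits : ∀ i ∈ F, ∃ c, c ≠ b i ∧ Function.update b i c ∈ C := by
    intro i hi
    have hMi : mergeProj S S' i = none := (Finset.mem_filter.1 hi).2
    have hcard : 1 < Fintype.card (Fin k) := by simpa using (show 1 < k by omega)
    rcases hS : S i with _ | a
    · obtain ⟨c, hc⟩ := Fintype.exists_ne_of_one_lt_card hcard (b i)
      exact ⟨c, hc, subset_bootClosure _ _
        (Or.inl (mem_projSet_update (fillPt_mem z S S') hS c))⟩
    · rcases hS' : S' i with _ | a'
      · obtain ⟨c, hc⟩ := Fintype.exists_ne_of_one_lt_card hcard (b i)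
        have := claim2 i hS' c hc ∅ (Finset.empty_subset D)
        rw [bE_empty] at this
        exact ⟨c, hc, this⟩
      · have hne : S i ≠ S' i := by
          intro h
          rw [mergeProj, if_pos h, hS] at hMi
          exact nomatch hMi
        have hiD : i ∈ D := by
          rw [hDdef, mem_Dset]
          exact ⟨hne, by rw [hS]; simp, by rw [hS']; simp⟩
        refine ⟨b' i, fun he => fillPt_ne hiD he.symm, ?_⟩
        have heq : Function.update b i (b' i) = bE {i} := by
          funext j
          by_cases hji : j = i
          · subst hji; rw [Function.update_self]; simp [hbEdef]
          · rw [Function.update_of_ne hji]; simp [hbEdef, hji]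
        rw [heq]
        exact claim1 {i} (Finset.singleton_subset_iff.2 hiD)
  have hsp := spread C hC b hbC F hwits
  refine subset_antisymm ?_ ?_
  · refine bootClosure_subset (isBC_projSet _) (Set.union_subset ?_ ?_)
    · exact projSet_subset_of mergeProj_left
    · exact projSet_subset_of mergeProj_right
  · intro v hv
    refine hsp v ?_
    intro i hi
    have hMi : mergeProj S S' i ≠ none := by
      intro h
      exact hi (Finset.mem_filter.2 ⟨Finset.mem_univ i, h⟩)
    obtain ⟨a, ha⟩ := Option.ne_none_iff_exists'.1 hMi
    have hbM : b ∈ projSet (mergeProj S S') :=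
      projSet_subset_of mergeProj_left (fillPt_mem z S S')
    rw [hv i a ha, hbM i a ha]

lemma stable_aux (hk : 2 ≤ k) (SH : Fin n → Option (Fin k))
    (A : Set (Fin n → Fin k))
    (hspan : bootClosure (hamming n k) (A ∩ projSet SH) = projSet SH)
    (t : ℕ) (ht2 : t ≤ projDim SH)
    (L : List ((Fin n → Option (Fin k)) × Set (Fin n → Fin k)))
    (hmem : ∀ p ∈ L, bootClosure (hamming n k) p.2 = projSet p.1 ∧
      projSet p.1 ⊆ projSet SH ∧ projDim p.1 < t)
    (hcov : A ∩ projSet SH ⊆ {v | ∃ p ∈ L, v ∈ p.2})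
    (hstab : ∀ x ∈ L, ∀ y ∈ L, x ≠ y →
      ¬ setDist (hamming n k) (projSet x.1) (projSet y.1) ≤ 2) : False := by
  have hz : 0 < k := by omega
  set U : Set (Fin n → Fin k) := {v | ∃ p ∈ L, v ∈ projSet p.1} with hUdef
  have hUc : IsBC (hamming n k) U := by
    rintro v u w hne a1 a2 ⟨p, hp, hup⟩ ⟨q, hq, hwq⟩
    by_cases hpq : p = q
    · subst hpq
      exact ⟨p, hp, isBC_projSet p.1 v u w hne a1 a2 hup hwq⟩
    · exfalso
      apply hstab p hp q hq hpq
      have h1 : hdst u v = 1 := by rw [hdst_comm]; exact a1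
      have h2 : hdst v w = 1 := a2
      have h3 : setDist (hamming n k) (projSet p.1) (projSet q.1) ≤ hdst u w :=
        setDist_le hup hwq
      have h4 := hdst_triangle u v w
      omega
  have hSHU : projSet SH ⊆ U := by
    rw [← hspan]
    refine bootClosure_subset hUc ?_
    intro v hv
    obtain ⟨p, hp, hvp⟩ := hcov hv
    have h5 := subset_bootClosure (hamming n k) p.2 hvp
    rw [(hmem p hp).1] at h5
    exact ⟨p, hp, h5⟩
  have hv₀ : fillPt ⟨0, hz⟩ SH SH ∈ projSet SH := fillPt_mem _ SH SH
  obtain ⟨p₀, hp₀, hv₀p⟩ := hSHU hv₀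
  have conn : ∀ m : ℕ, ∀ v w : Fin n → Fin k, v ∈ projSet p₀.1 → w ∈ projSet SH →
      hdst v w ≤ m → w ∈ projSet p₀.1 := by
    intro m
    induction m with
    | zero =>
      intro v w hv hw h
      rw [← hdst_eq_zero.1 (Nat.le_zero.1 h)]
      exact hv
    | succ m ihm =>
      intro v w hv hw hle
      by_cases h' : hdst v w ≤ m
      · exact ihm v w hv hw h'
      · have hpos : 0 < hdst v w := by omega
        obtain ⟨i, hi⟩ := Finset.card_pos.1 hpos
        have hivw : v i ≠ w i := by simpa using hi
        have hSHi : SH i = none := by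
          by_contra hs
          obtain ⟨a, ha⟩ := Option.ne_none_iff_exists'.1 hs
          have h1 := (hmem p₀ hp₀).2.1 hv i a ha
          have h2 := hw i a ha
          exact hivw (h1.trans h2.symm)
        set w' := Function.update w i (v i) with hw'def
        have hw'SH : w' ∈ projSet SH := mem_projSet_update hw hSHi (v i)
        have hd' : hdst v w' ≤ m := by
          have he : (Finset.univ.filter fun j => v j ≠ w' j)
              = (Finset.univ.filter fun j => v j ≠ w j).erase i := by
            ext j
            by_cases hj : j = i
            · subst hj; simp [hw'def, Function.update_self]
            · simp [hw'def, Function.update_of_ne hj, hj]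
          unfold hdst
          rw [he, Finset.card_erase_of_mem hi]
          unfold hdst at hle
          omega
        have hw'p := ihm v w' hv hw'SH hd'
        obtain ⟨q, hq, hwq⟩ := hSHU hw
        by_cases hqp : q = p₀
        · subst hqp; exact hwq
        · exfalso
          apply hstab q hq p₀ hp₀ hqp
          have h3 : setDist (hamming n k) (projSet q.1) (projSet p₀.1) ≤ hdst w w' :=
            setDist_le hwq hw'p
          have hadj : (hamming n k).Adj w w' := by
            refine adj_of_eq i ?_ ?_
            · rw [hw'def, Function.update_self]; exact fun h => hivw h.symm
            · intro j hj; rw [hw'def, Function.update_of_ne hj]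
          have h1 : hdst w w' = 1 := hadj
          omega
  have hsub : projSet SH ⊆ projSet p₀.1 := by
    intro w hw
    exact conn (hdst (fillPt ⟨0, hz⟩ SH SH) w) _ w hv₀p hw le_rfl
  have h6 := projDim_le_of_subset hk hsub
  have h7 := (hmem p₀ hp₀).2.2
  omega

lemma main_aux (hk : 2 ≤ k) (A : Set (Fin n → Fin k)) (SH : Fin n → Option (Fin k))
    (hspan : bootClosure (hamming n k) (A ∩ projSet SH) = projSet SH)
    (t : ℕ) (ht1 : 1 ≤ t) (ht2 : t ≤ projDim SH) :
    ∀ r : ℕ, ∀ L : List ((Fin n → Option (Fin k)) × Set (Fin n → Fin k)),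
      L.length ≤ r →
      (∀ p ∈ L, p.2 ⊆ A ∧ bootClosure (hamming n k) p.2 = projSet p.1 ∧
        projSet p.1 ⊆ projSet SH ∧ projDim p.1 < t) →
      List.Pairwise (fun p q => Disjoint p.2 q.2) L →
      (A ∩ projSet SH ⊆ {v | ∃ p ∈ L, v ∈ p.2}) →
      ∃ (ℓ i j d : ℕ) (Sℓ Si Sj : Fin n → Option (Fin k)),
        t ≤ ℓ ∧ j ≤ i ∧ i < t ∧ d ≤ 2 ∧
        projDim Sℓ = ℓ ∧ projDim Si = i ∧ projDim Sj = j ∧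
        setDist (hamming n k) (projSet Si) (projSet Sj) = d ∧
        bootClosure (hamming n k) (projSet Si ∪ projSet Sj) = projSet Sℓ ∧
        ∃ Ai Aj : Set (Fin n → Fin k), Ai ⊆ A ∧ Aj ⊆ A ∧ Disjoint Ai Aj ∧
          bootClosure (hamming n k) (Ai ∩ projSet Si) = projSet Si ∧
          bootClosure (hamming n k) (Aj ∩ projSet Sj) = projSet Sj := by
  intro r
  induction r with
  | zero =>
    intro L hlen hmem hpw hcov
    exfalso
    have hL : L = [] := List.length_eq_zero_iff.1 (Nat.le_zero.1 hlen)
    subst hL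
    refine stable_aux hk SH A hspan t ht2 [] (by simp) hcov (by simp)
  | succ r ih =>
    intro L hlen hmem hpw hcov
    by_cases hmerge : ∃ x ∈ L, ∃ y ∈ L, x ≠ y ∧
        setDist (hamming n k) (projSet x.1) (projSet y.1) ≤ 2
    · obtain ⟨x, hx, y, hy, hxy, hdle⟩ := hmerge
      have hz : 0 < k := by omega
      have hdcard : (Dset x.1 y.1).card ≤ 2 := by
        rw [← setDist_proj hz]; exact hdle
      have hmerge_eq := merge_closure hk x.1 y.1 hdcard
      obtain ⟨hxA, hxcl, hxSH, hxdim⟩ := hmem x hx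
      obtain ⟨hyA, hycl, hySH, hydim⟩ := hmem y hy
      have hdisj : Disjoint x.2 y.2 :=
        @List.Pairwise.forall _ _ _ ⟨fun a b h => h.symm⟩ hpw _ hx _ hy hxy
      have hclBB : bootClosure (hamming n k) (x.2 ∪ y.2) = projSet (mergeProj x.1 y.1) := by
        rw [bootClosure_union_closure, hxcl, hycl, hmerge_eq]
      have hseedx : x.2 ⊆ projSet x.1 := hxcl ▸ subset_bootClosure _ x.2
      have hseedy : y.2 ⊆ projSet y.1 := hycl ▸ subset_bootClosure _ y.2
      by_cases hl : t ≤ projDim (mergeProj x.1 y.1)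
      · rcases le_or_gt (projDim y.1) (projDim x.1) with hord | hord
        · refine ⟨_, _, _, _, mergeProj x.1 y.1, x.1, y.1, hl, hord, hxdim, hdle,
            rfl, rfl, rfl, rfl, hmerge_eq, x.2, y.2, hxA, hyA, hdisj, ?_, ?_⟩
          · rw [Set.inter_eq_self_of_subset_left hseedx]; exact hxcl
          · rw [Set.inter_eq_self_of_subset_left hseedy]; exact hycl
        · refine ⟨_, _, _, _, mergeProj x.1 y.1, y.1, x.1, hl, hord.le, hydim, ?_,
            rfl, rfl, rfl, rfl, ?_, y.2, x.2, hyA, hxA, hdisj.symm, ?_, ?_⟩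
          · rw [setDist_comm]; exact hdle
          · rw [Set.union_comm]; exact hmerge_eq
          · rw [Set.inter_eq_self_of_subset_left hseedy]; exact hycl
          · rw [Set.inter_eq_self_of_subset_left hseedx]; exact hxcl
      · have hne_seed : ∀ p ∈ L, p.2.Nonempty := by
          intro p hp
          rcases Set.eq_empty_or_nonempty p.2 with he | hne
          · exfalso
            have hcl := (hmem p hp).2.1
            rw [he, bootClosure_empty] at hcl
            have hfp : fillPt ⟨0, hz⟩ p.1 p.1 ∈ projSet p.1 := fillPt_mem _ p.1 p.1
            rw [← hcl] at hfp
            exact hfp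
          · exact hne
        have hnodup : L.Nodup := by
          refine List.Pairwise.imp_of_mem ?_ hpw
          intro a b ha hb hd hab
          obtain ⟨v, hv⟩ := hne_seed a ha
          subst hab
          exact Set.disjoint_left.1 hd hv hv
        have hyx : y ∈ L.erase x := (List.Nodup.mem_erase_iff hnodup).2 ⟨Ne.symm hxy, hy⟩
        set L' : List ((Fin n → Option (Fin k)) × Set (Fin n → Fin k)) :=
          (mergeProj x.1 y.1, x.2 ∪ y.2) :: ((L.erase x).erase y) with hL'def
        have hsub2 : ((L.erase x).erase y).Sublist L :=
          List.erase_sublist.trans List.erase_sublist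
        have hlx : (L.erase x).length = L.length - 1 := List.length_erase_of_mem hx
        have hly : ((L.erase x).erase y).length = (L.erase x).length - 1 :=
          List.length_erase_of_mem hyx
        have hlen1 : 1 ≤ (L.erase x).length := List.length_pos_iff.2 (List.ne_nil_of_mem hyx)
        have hlenL' : L'.length ≤ r := by
          rw [hL'def, List.length_cons]
          omega
        have hmemtail : ∀ q ∈ (L.erase x).erase y, q ∈ L ∧ q ≠ x ∧ q ≠ y := by
          intro q hq
          have h1 := (List.Nodup.mem_erase_iff (hnodup.erase x)).1 hq
          have h2 := (List.Nodup.mem_erase_iff hnodup).1 h1.2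
          exact ⟨h2.2, h2.1, h1.1⟩
        have hmem' : ∀ p ∈ L', p.2 ⊆ A ∧ bootClosure (hamming n k) p.2 = projSet p.1 ∧
            projSet p.1 ⊆ projSet SH ∧ projDim p.1 < t := by
          intro p hp
          rcases List.mem_cons.1 hp with rfl | hp'
          · refine ⟨Set.union_subset hxA hyA, hclBB, ?_,
              show projDim (mergeProj x.1 y.1) < t by omega⟩
            rw [← hmerge_eq]
            exact bootClosure_subset (isBC_projSet SH) (Set.union_subset hxSH hySH)
          · exact hmem p (hsub2.subset hp')
        have hpw' : List.Pairwise (fun p q => Disjoint p.2 q.2) L' := by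
          refine List.pairwise_cons.2 ⟨?_, List.Pairwise.sublist hsub2 hpw⟩
          intro q hq
          obtain ⟨hqL, hqx, hqy⟩ := hmemtail q hq
          refine Set.disjoint_union_left.2 ⟨?_, ?_⟩
          · exact @List.Pairwise.forall _ _ _ ⟨fun a b h => h.symm⟩ hpw _ hx _ hqL (Ne.symm hqx)
          · exact @List.Pairwise.forall _ _ _ ⟨fun a b h => h.symm⟩ hpw _ hy _ hqL (Ne.symm hqy)
        have hcov' : A ∩ projSet SH ⊆ {v | ∃ p ∈ L', v ∈ p.2} := by
          intro v hv
          obtain ⟨p, hp, hvp⟩ := hcov hv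
          by_cases hpx : p = x
          · exact ⟨(mergeProj x.1 y.1, x.2 ∪ y.2), List.mem_cons_self,
              Set.mem_union_left _ (hpx ▸ hvp)⟩
          by_cases hpy : p = y
          · exact ⟨(mergeProj x.1 y.1, x.2 ∪ y.2), List.mem_cons_self,
              Set.mem_union_right _ (hpy ▸ hvp)⟩
          refine ⟨p, List.mem_cons.2 (Or.inr ?_), hvp⟩
          exact (List.Nodup.mem_erase_iff (hnodup.erase x)).2
            ⟨hpy, (List.Nodup.mem_erase_iff hnodup).2 ⟨hpx, hp⟩⟩
        exact ih L' hlenL' hmem' hpw' hcov'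
    · exfalso
      push_neg at hmerge
      refine stable_aux hk SH A hspan t ht2 L (fun p hp => (hmem p hp).2) hcov ?_
      intro x hx y hy hxy
      have := hmerge x hx y hy hxy
      omega

end BP

theorem stmt7 (n k : ℕ) (hk : 2 ≤ k) (A : Set (Fin n → Fin k))
    (SH : Fin n → Option (Fin k))
    (hspan : bootClosure (hamming n k) (A ∩ projSet SH) = projSet SH)
    (t : ℕ) (ht1 : 1 ≤ t) (ht2 : t ≤ projDim SH) :
    ∃ (ℓ i j d : ℕ) (Sℓ Si Sj : Fin n → Option (Fin k)),
      t ≤ ℓ ∧ j ≤ i ∧ i < t ∧ d ≤ 2 ∧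
      projDim Sℓ = ℓ ∧ projDim Si = i ∧ projDim Sj = j ∧
      setDist (hamming n k) (projSet Si) (projSet Sj) = d ∧
      bootClosure (hamming n k) (projSet Si ∪ projSet Sj) = projSet Sℓ ∧
      ∃ Ai Aj : Set (Fin n → Fin k), Ai ⊆ A ∧ Aj ⊆ A ∧ Disjoint Ai Aj ∧
        bootClosure (hamming n k) (Ai ∩ projSet Si) = projSet Si ∧
        bootClosure (hamming n k) (Aj ∩ projSet Sj) = projSet Sj := by
  classical
  set L₀ : List ((Fin n → Option (Fin k)) × Set (Fin n → Fin k)) :=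
    ((A ∩ projSet SH).toFinite.toFinset.toList.map fun a => (fun i => some (a i), {a}))
    with hL₀def
  refine BP.main_aux hk A SH hspan t ht1 ht2 L₀.length L₀ le_rfl ?_ ?_ ?_
  · intro p hp
    obtain ⟨a, ha, rfl⟩ := List.mem_map.1 hp
    have haA : a ∈ A ∩ projSet SH := by
      have := Finset.mem_toList.1 ha
      rwa [Set.Finite.mem_toFinset] at this
    refine ⟨Set.singleton_subset_iff.2 haA.1, ?_, ?_, ?_⟩
    · rw [BP.bootClosure_singleton, BP.projSet_singProj]
    · rw [BP.projSet_singProj]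
      exact Set.singleton_subset_iff.2 haA.2
    · rw [BP.projDim_singProj]
      omega
  · refine List.Pairwise.map (R := fun a b : Fin n → Fin k => a ≠ b) _ ?_ ?_
    · intro a b hab
      exact Set.disjoint_singleton.2 hab
    · exact Finset.nodup_toList _
  · intro v hv
    refine ⟨(fun i => some (v i), {v}), ?_, rfl⟩
    exact List.mem_map.2 ⟨v, Finset.mem_toList.2
      ((A ∩ projSet SH).toFinite.mem_toFinset.2 hv), rfl⟩
end

section
/- Let 2 ≤ k ≤ 2^{√n}, p ≤ p_* := n^{-2} k^{-2√n+1}, and D := ⌊2√n⌋ − 2. Then C(n,D) · k^{n−D+1/2} · Φ(D) → 0 as n → ∞, uniformly over all such k and p, where C(n,D) is the binomial coefficient. -/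
open scoped Classical

lemma psi_nonneg (n k m : ℕ) : 0 ≤ Psi n k m := by
  induction m with
  | zero => norm_num [Psi]
  | succ m ih =>
    rw [Psi]
    split
    · positivity
    · have h1 : (0:ℝ) ≤ 1 + (k : ℝ) ^ (-(((m : ℝ) + 1) - 11) / 2) := by positivity
      have h2 : (0:ℝ) ≤ 1 + 4 / (n : ℝ) := by positivity
      positivity

lemma rpow_base_le {k : ℕ} (hk : 2 ≤ k) {x : ℝ} (hx : x ≤ 0) :
    (k:ℝ) ^ x ≤ (2:ℝ) ^ x := by
  have hk0 : (0:ℝ) < k := by positivity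
  have h : (2:ℝ) ^ (-x) ≤ (k:ℝ) ^ (-x) :=
    Real.rpow_le_rpow (by norm_num) (by exact_mod_cast hk) (by linarith)
  calc (k:ℝ) ^ x = ((k:ℝ) ^ (-x))⁻¹ := by rw [← Real.rpow_neg hk0.le, neg_neg]
    _ ≤ ((2:ℝ) ^ (-x))⁻¹ := by
        rw [inv_le_inv₀ (by positivity) (by positivity)]; exact h
    _ = (2:ℝ) ^ x := by rw [← Real.rpow_neg (by norm_num), neg_neg]

lemma sqrt2_ub : Real.sqrt 2 ≤ 1.415 := by
  nlinarith [Real.sq_sqrt (by norm_num : (0:ℝ) ≤ 2), Real.sqrt_nonneg 2]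

lemma sqrt2_lb : (1.414:ℝ) ≤ Real.sqrt 2 := by
  nlinarith [Real.sq_sqrt (by norm_num : (0:ℝ) ≤ 2), Real.sqrt_nonneg 2]

lemma small_psi (j : ℕ) (hj : j ≤ 14) : (1/2:ℝ) * (9 * Real.sqrt 2 / 10) ^ j ≤ 16 := by
  have hb : (9 * Real.sqrt 2 / 10) ≤ 1.28 := by nlinarith [sqrt2_ub]
  have hb0 : (0:ℝ) ≤ 9 * Real.sqrt 2 / 10 := by positivity
  have h1 : (9 * Real.sqrt 2 / 10) ^ j ≤ (1.28:ℝ) ^ j := pow_le_pow_left₀ hb0 hb j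
  have h2 : (1.28:ℝ) ^ j ≤ (1.28:ℝ) ^ 14 := pow_le_pow_right₀ (by norm_num) hj
  have h3 : (1.28:ℝ) ^ 14 ≤ 32 := by norm_num
  linarith

lemma step_bound {k : ℕ} (hk : 2 ≤ k) (m : ℕ) (hm : 15 ≤ m + 1) :
    (k : ℝ) ^ (-(((m : ℝ) + 1) - 11) / 2) ≤ 64 * (3/4:ℝ) ^ (m+1) := by
  have hm' : (14:ℝ) ≤ (m:ℝ) := by exact_mod_cast Nat.lt_succ_iff.mp hm
  set M : ℝ := (m:ℝ) + 1 with hM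
  have h1 : (k : ℝ) ^ (-(M - 11) / 2) ≤ (2:ℝ) ^ (-(M - 11) / 2) :=
    rpow_base_le hk (by simp only [hM]; linarith)
  have e1 : (-(M - 11) / 2) = (11:ℝ)/2 + (-(1:ℝ)/2) * M := by ring
  have h2 : (2:ℝ) ^ (-(M - 11) / 2) = (2:ℝ)^((11:ℝ)/2) * ((2:ℝ)^(-(1:ℝ)/2))^M := by
    rw [e1, Real.rpow_add (by norm_num), Real.rpow_mul (by norm_num)]
  have h3 : (2:ℝ)^((11:ℝ)/2) ≤ 64 := by
    have : (2:ℝ)^((11:ℝ)/2) ≤ (2:ℝ)^((6:ℕ):ℝ) :=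
      Real.rpow_le_rpow_of_exponent_le (by norm_num) (by norm_num)
    rwa [Real.rpow_natCast, show (2:ℝ)^(6:ℕ) = 64 by norm_num] at this
  have hbase : (2:ℝ)^(-(1:ℝ)/2) ≤ 3/4 := by
    have hs : ((2:ℝ)^((1:ℝ)/2)) = Real.sqrt 2 := (Real.sqrt_eq_rpow 2).symm
    have h4 : (4/3:ℝ) ≤ (2:ℝ)^((1:ℝ)/2) := by rw [hs]; nlinarith [sqrt2_lb]
    calc (2:ℝ)^(-(1:ℝ)/2) = ((2:ℝ)^((1:ℝ)/2))⁻¹ := by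
          rw [← Real.rpow_neg (by norm_num)]; norm_num
      _ ≤ (4/3:ℝ)⁻¹ := by
          rw [inv_le_inv₀ (by positivity) (by norm_num)]; exact h4
      _ ≤ 3/4 := by norm_num
  have h5 : ((2:ℝ)^(-(1:ℝ)/2))^M ≤ (3/4:ℝ)^M :=
    Real.rpow_le_rpow (by positivity) hbase (by simp only [hM]; positivity)
  have h6 : (3/4:ℝ)^M = (3/4:ℝ)^(m+1) := by
    rw [hM, show (m:ℝ)+1 = ((m+1:ℕ):ℝ) by push_cast; ring, Real.rpow_natCast]
  calc (k : ℝ) ^ (-(M - 11) / 2) ≤ (2:ℝ)^((11:ℝ)/2) * ((2:ℝ)^(-(1:ℝ)/2))^M := by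
        rw [← h2]; exact h1
    _ ≤ 64 * (3/4:ℝ)^(m+1) := by
        rw [← h6]
        exact mul_le_mul h3 h5 (by positivity) (by norm_num)

lemma psi_le_aux (n k : ℕ) (hk : 2 ≤ k) (m : ℕ) :
    Psi n k m ≤ 16 * Real.exp (64 * ∑ j ∈ Finset.range (m+1), (3/4:ℝ)^j + 4*(m:ℝ)/(n:ℝ)) := by
  induction m with
  | zero =>
    have h : (1:ℝ) ≤ Real.exp (64 * ∑ j ∈ Finset.range 1, (3/4:ℝ)^j + 4*(0:ℝ)/(n:ℝ)) :=
      Real.one_le_exp (by positivity)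
    rw [Psi]
    nlinarith
  | succ m ih =>
    rw [Psi]
    split
    · calc (1/2:ℝ) * (9 * Real.sqrt 2 / 10) ^ (m+1) ≤ 16 := small_psi (m+1) ‹m+1 ≤ 14›
        _ ≤ _ := by
          nlinarith [Real.one_le_exp (show (0:ℝ) ≤ 64 * ∑ j ∈ Finset.range (m+1+1), (3/4:ℝ)^j + 4*((m+1:ℕ):ℝ)/(n:ℝ) by positivity)]
    · have hm15 : 15 ≤ m + 1 := by omega
      have hA : (1 + (k : ℝ) ^ (-(((m : ℝ) + 1) - 11) / 2)) ≤ Real.exp (64 * (3/4:ℝ)^(m+1)) := by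
        have := step_bound hk m hm15
        have := Real.add_one_le_exp (64 * (3/4:ℝ)^(m+1))
        linarith
      have hB : (1 + 4 / (n : ℝ)) ≤ Real.exp (4/(n:ℝ)) := by
        have := Real.add_one_le_exp (4/(n:ℝ))
        linarith
      have h0 : (0:ℝ) ≤ Psi n k m := psi_nonneg n k m
      have h1 : (0:ℝ) ≤ 1 + (k : ℝ) ^ (-(((m : ℝ) + 1) - 11) / 2) := by positivity
      calc Psi n k m * (1 + (k : ℝ) ^ (-(((m : ℝ) + 1) - 11) / 2)) * (1 + 4 / (n : ℝ))
          ≤ (16 * Real.exp (64 * ∑ j ∈ Finset.range (m+1), (3/4:ℝ)^j + 4*(m:ℝ)/(n:ℝ))) *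
            Real.exp (64 * (3/4:ℝ)^(m+1)) * Real.exp (4/(n:ℝ)) := by
            apply mul_le_mul _ hB (by positivity) (by positivity)
            exact mul_le_mul ih hA h1 (by positivity)
      _ = 16 * Real.exp ((64 * ∑ j ∈ Finset.range (m+1), (3/4:ℝ)^j + 4*(m:ℝ)/(n:ℝ)) +
            (64 * (3/4:ℝ)^(m+1) + 4/(n:ℝ))) := by
            rw [mul_assoc, mul_assoc, ← Real.exp_add, ← Real.exp_add]
      _ = 16 * Real.exp (64 * ∑ j ∈ Finset.range (m+1+1), (3/4:ℝ)^j + 4*((m+1:ℕ):ℝ)/(n:ℝ)) := by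
            congr 2
            conv_rhs => rw [Finset.sum_range_succ]
            push_cast
            ring
  
lemma psi_le (n k : ℕ) (hk : 2 ≤ k) (m : ℕ) (hm : (m:ℝ)/(n:ℝ) ≤ 2) :
    Psi n k m ≤ 16 * Real.exp 264 := by
  have h := psi_le_aux n k hk m
  have hsum : ∑ j ∈ Finset.range (m+1), (3/4:ℝ)^j ≤ 4 := by
    rw [geom_sum_eq (by norm_num)]
    have : (0:ℝ) ≤ (3/4:ℝ)^(m+1) := by positivity
    rw [div_le_iff_of_neg (by norm_num)]
    linarith
  have : Real.exp (64 * ∑ j ∈ Finset.range (m+1), (3/4:ℝ)^j + 4*(m:ℝ)/(n:ℝ)) ≤ Real.exp 264 := by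
    apply Real.exp_le_exp.mpr
    have : 4*(m:ℝ)/(n:ℝ) ≤ 8 := by
      rw [mul_div_assoc]; linarith
    linarith
  linarith

set_option maxHeartbeats 1000000 in
theorem stmt14 :
    ∀ ε : ℝ, 0 < ε → ∃ N : ℕ, ∀ n : ℕ, N ≤ n → ∀ k : ℕ, 2 ≤ k →
      (k : ℝ) ≤ (2 : ℝ) ^ Real.sqrt n → ∀ p : ℝ, 0 < p → p ≤ pStar n k →
        (Nat.choose n (⌊2 * Real.sqrt n⌋₊ - 2) : ℝ) *
            (k : ℝ) ^ ((n : ℝ) - ((⌊2 * Real.sqrt n⌋₊ - 2 : ℕ) : ℝ) + 1 / 2) *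
            Phi n k p (⌊2 * Real.sqrt n⌋₊ - 2) ≤ ε := by
  intro ε hε
  obtain ⟨N₀, hN₀⟩ := exists_nat_gt (16 * Real.exp 264 * (2:ℝ)^((3:ℝ)/2) / ε)
  refine ⟨max N₀ 16, ?_⟩
  intro n hn k hk hk2 p hp hps
  have hp' : (0:ℝ) ≤ p := hp.le
  have hn16 : 16 ≤ n := le_trans (le_max_right _ _) hn
  have hnN : (N₀:ℝ) ≤ (n:ℝ) := by exact_mod_cast le_trans (le_max_left _ _) hn
  have hn16' : (16:ℝ) ≤ (n:ℝ) := by exact_mod_cast hn16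
  have hn0 : (0:ℝ) < n := by linarith
  have hn1 : (1:ℝ) ≤ n := by linarith
  have hk2' : (2:ℝ) ≤ (k:ℝ) := by exact_mod_cast hk
  have hk0 : (0:ℝ) < k := by linarith
  have hk1 : (1:ℝ) ≤ (k:ℝ) := by linarith
  set s := Real.sqrt n with hsdef
  have hs0 : 0 ≤ s := Real.sqrt_nonneg n
  have hsn : s^2 = n := Real.sq_sqrt hn0.le
  have hs4 : 4 ≤ s := by nlinarith
  set D : ℕ := ⌊2*s⌋₊ - 2 with hDdef
  have hfloor2 : 2 ≤ ⌊2*s⌋₊ := Nat.le_floor (by push_cast; linarith)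
  have hdr : (D:ℝ) = (⌊2*s⌋₊:ℝ) - 2 := by
    rw [hDdef, Nat.cast_sub hfloor2]; norm_num
  have hub : (D:ℝ) ≤ 2*s - 2 := by
    have := Nat.floor_le (show (0:ℝ) ≤ 2*s by linarith)
    rw [hdr]; linarith
  have hlb : 2*s - 3 ≤ (D:ℝ) := by
    have := Nat.lt_floor_add_one (2*s)
    rw [hdr]; linarith
  have hD0 : (0:ℝ) ≤ (D:ℝ) := by positivity
  -- bounds on individual factors
  have hPsi : Psi n k D ≤ 16 * Real.exp 264 := by
    apply psi_le n k hk D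
    rw [div_le_iff₀ hn0]
    nlinarith
  have hpstar_pos : 0 < pStar n k := by
    rw [pStar]
    have h1 : (0:ℝ) < (n:ℝ)^(-2:ℝ) := Real.rpow_pos_of_pos hn0 _
    have h2 : (0:ℝ) < (k:ℝ)^(-2*s+1) := Real.rpow_pos_of_pos hk0 _
    positivity
  have hP : p ^ ((D:ℝ)/2 + 1) ≤ pStar n k ^ ((D:ℝ)/2 + 1) :=
    Real.rpow_le_rpow hp' hps (by positivity)
  have hKm : ((k:ℝ)-1)^D ≤ (k:ℝ)^D := pow_le_pow_left₀ (by linarith) (by linarith) D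
  have hCF : (Nat.choose n D : ℝ) * (Nat.factorial D : ℝ) ≤ (n:ℝ)^((D:ℕ):ℝ) := by
    rw [Real.rpow_natCast]
    have h := Nat.descFactorial_le_pow n D
    rw [Nat.descFactorial_eq_factorial_mul_choose] at h
    calc (Nat.choose n D : ℝ) * (Nat.factorial D : ℝ)
        = ((Nat.factorial D * Nat.choose n D : ℕ) : ℝ) := by push_cast; ring
      _ ≤ ((n^D : ℕ) : ℝ) := by exact_mod_cast h
      _ = (n:ℝ)^D := by push_cast; ring
  have hE : ((n:ℝ) - (D:ℝ) + 1/2) + (-2*s+1)*((D:ℝ)/2 + 1) + (D:ℝ)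
      + (((D:ℝ)^2 + 2*(D:ℝ))/4) ≤ 3/4 := by
    nlinarith [mul_nonneg (show (0:ℝ) ≤ 2*s-2-(D:ℝ) by linarith)
      (show (0:ℝ) ≤ (D:ℝ)-(2*s-3) by linarith)]
  have e1 : pStar n k ^ ((D:ℝ)/2 + 1) =
      (n:ℝ)^((-2:ℝ)*((D:ℝ)/2 + 1)) * (k:ℝ)^((-2*s+1)*((D:ℝ)/2 + 1)) := by
    rw [pStar, Real.mul_rpow (by positivity) (by positivity),
      ← Real.rpow_mul hn0.le, ← Real.rpow_mul hk0.le]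
  -- main chain
  rw [Phi]
  calc (Nat.choose n D : ℝ) * (k:ℝ)^((n:ℝ) - (D:ℝ) + 1/2) *
        (Psi n k D * p ^ ((D:ℝ)/2 + 1) * (Nat.factorial D : ℝ) * (2:ℝ)^(-(D:ℝ)/2) *
          ((k:ℝ)-1)^D * (k:ℝ)^(((D:ℝ)^2 + 2*(D:ℝ))/4))
      ≤ (Nat.choose n D : ℝ) * (k:ℝ)^((n:ℝ) - (D:ℝ) + 1/2) *
        ((16 * Real.exp 264) * pStar n k ^ ((D:ℝ)/2 + 1) * (Nat.factorial D : ℝ) *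
          (2:ℝ)^(-(D:ℝ)/2) * (k:ℝ)^D * (k:ℝ)^(((D:ℝ)^2 + 2*(D:ℝ))/4)) := by
        gcongr <;> first
          | exact hPsi
          | exact hP
          | exact hKm
          | exact psi_nonneg n k D
          | exact hpstar_pos.le
          | exact pow_nonneg (by linarith : (0:ℝ) ≤ (k:ℝ)-1) D
          | exact hk1
          | positivity
          | linarith
    _ = (16 * Real.exp 264) * ((Nat.choose n D : ℝ) * (Nat.factorial D : ℝ)) *
        (n:ℝ)^((-2:ℝ)*((D:ℝ)/2 + 1)) * (2:ℝ)^(-(D:ℝ)/2) *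
        (k:ℝ)^(((n:ℝ) - (D:ℝ) + 1/2) + (-2*s+1)*((D:ℝ)/2 + 1) + (D:ℝ)
          + (((D:ℝ)^2 + 2*(D:ℝ))/4)) := by
        rw [e1, ← Real.rpow_natCast (k:ℝ) D]
        simp only [Real.rpow_add hk0]
        ring
    _ ≤ (16 * Real.exp 264) * (n:ℝ)^((D:ℕ):ℝ) *
        (n:ℝ)^((-2:ℝ)*((D:ℝ)/2 + 1)) * (2:ℝ)^(-(D:ℝ)/2) * (k:ℝ)^((3:ℝ)/4) := by
        gcongr <;> first
          | exact hCF
          | exact Real.rpow_le_rpow_of_exponent_le hk1 hE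
          | exact hk1
          | positivity
          | linarith
    _ = (16 * Real.exp 264) * (n:ℝ)^(-2:ℝ) * ((2:ℝ)^(-(D:ℝ)/2) * (k:ℝ)^((3:ℝ)/4)) := by
        rw [mul_assoc ((16 * Real.exp 264) : ℝ), ← Real.rpow_add hn0,
          show ((D:ℕ):ℝ) + (-2:ℝ)*((D:ℝ)/2 + 1) = (-2:ℝ) by push_cast; ring]
        ring
    _ ≤ (16 * Real.exp 264) * (n:ℝ)^(-2:ℝ) * ((2:ℝ)^((3:ℝ)/2 - s) * (2:ℝ)^(s*((3:ℝ)/4))) := by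
        have hk34 : (k:ℝ)^((3:ℝ)/4) ≤ (2:ℝ)^(s*((3:ℝ)/4)) := by
          calc (k:ℝ)^((3:ℝ)/4) ≤ ((2:ℝ)^s)^((3:ℝ)/4) :=
                Real.rpow_le_rpow hk0.le hk2 (by norm_num)
            _ = (2:ℝ)^(s*((3:ℝ)/4)) := (Real.rpow_mul (by norm_num) s _).symm
        gcongr <;> first
          | exact hk34
          | linarith [hlb]
          | positivity
          | norm_num
    _ ≤ (16 * Real.exp 264) * (n:ℝ)^(-2:ℝ) * (2:ℝ)^((3:ℝ)/2) := by
        gcongr (16 * Real.exp 264) * (n:ℝ)^(-2:ℝ) * ?_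
        rw [← Real.rpow_add (by norm_num : (0:ℝ) < 2)]
        exact Real.rpow_le_rpow_of_exponent_le one_le_two (by linarith)
    _ ≤ ε := by
        have hinv : (n:ℝ)^(-2:ℝ) ≤ (n:ℝ)⁻¹ := by
          rw [show (n:ℝ)⁻¹ = (n:ℝ)^(-1:ℝ) by rw [Real.rpow_neg_one]]
          exact Real.rpow_le_rpow_of_exponent_le hn1 (by norm_num)
        have hQ : (0:ℝ) < 16 * Real.exp 264 * (2:ℝ)^((3:ℝ)/2) := by positivity
        rw [div_lt_iff₀ hε] at hN₀
        have h1 : 16 * Real.exp 264 * (2:ℝ)^((3:ℝ)/2) ≤ ε * n := by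
          have := mul_le_mul_of_nonneg_right hnN hε.le
          nlinarith
        calc (16 * Real.exp 264) * (n:ℝ)^(-2:ℝ) * (2:ℝ)^((3:ℝ)/2)
            = (16 * Real.exp 264 * (2:ℝ)^((3:ℝ)/2)) * (n:ℝ)^(-2:ℝ) := by ring
          _ ≤ (16 * Real.exp 264 * (2:ℝ)^((3:ℝ)/2)) * (n:ℝ)⁻¹ := by
              apply mul_le_mul_of_nonneg_left hinv hQ.le
          _ ≤ (ε * n) * (n:ℝ)⁻¹ := by
              apply mul_le_mul_of_nonneg_right h1 (by positivity)
          _ = ε := by field_simp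
end
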